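/- arXiv:1901.08237 — 4 statements merged into one kernel-verified Lean document; each statement's English description precedes it below -/
import Mathlib

section
/- Let k' ≥ k be positive integers with k' = c² k for some c ≥ 1. For any vectors β*, z ∈ ℝ^d with ‖β*‖₀ ≤ k and β* ≠ H_{k'}(z), where H_{k'}(z) denotes the hard thresholding operator keeping the k' largest-magnitude coordinates of z and zeroing the rest, we have ⟨β* − H_{k'}(z), z − H_{k'}(z)⟩ ≤ (1/2)·√(k/k')·‖β* − H_{k'}(z)‖₂². -/
open Finset

/-- Hard thresholding lemma: if `w = H_{k'}(z)` keeps the `k'` largest-magnitude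
coordinates of `z` (zeroing the rest), `‖β*‖₀ ≤ k`, `k' = c²k` with `c ≥ 1`, and
`β* ≠ w`, then `⟨β* − w, z − w⟩ ≤ (1/2)·√(k/k')·‖β* − w‖₂²`. -/
theorem hard_thresholding_inner_bound (d k k' : ℕ) (hk : 0 < k) (hkk' : k ≤ k')
    (c : ℝ) (hc : 1 ≤ c) (hck : (k' : ℝ) = c ^ 2 * k)
    (βs z w : Fin d → ℝ)
    (hβs : (Finset.univ.filter fun i => βs i ≠ 0).card ≤ k)
    (A : Finset (Fin d)) (hA : A.card = k')
    (hwA : ∀ i ∈ A, w i = z i) (hwA' : ∀ i ∉ A, w i = 0)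
    (htop : ∀ i ∈ A, ∀ j ∉ A, |z j| ≤ |z i|)
    (hne : βs ≠ w) :
    ∑ i, (βs i - w i) * (z i - w i) ≤
      (1 / 2) * Real.sqrt ((k : ℝ) / k') * ∑ i, (βs i - w i) ^ 2 := by
  classical
  set S : Finset (Fin d) := Finset.univ.filter fun i => βs i ≠ 0 with hSdef
  set T : Finset (Fin d) := S \ A with hTdef
  have hk' : 0 < k' := lt_of_lt_of_le hk hkk'
  have hk'R : (0:ℝ) < (k':ℝ) := by exact_mod_cast hk'
  set r : ℝ := Real.sqrt ((k : ℝ) / k') with hrdef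
  have hr0 : 0 < r := Real.sqrt_pos.mpr (by positivity)
  have hr2 : r ^ 2 = (k : ℝ) / k' := Real.sq_sqrt (by positivity)
  -- rewrite LHS as a sum over T = S \ A
  have hzero : ∀ i ∈ Finset.univ, i ∉ T → (βs i - w i) * (z i - w i) = 0 := by
    intro i _ hi
    by_cases hiA : i ∈ A
    · rw [hwA i hiA]; ring
    · have hβ : βs i = 0 := by
        by_contra h
        exact hi (Finset.mem_sdiff.mpr ⟨Finset.mem_filter.mpr ⟨Finset.mem_univ i, h⟩, hiA⟩)
      rw [hβ, hwA' i hiA]; ring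
  have hLHS : ∑ i, (βs i - w i) * (z i - w i) = ∑ j ∈ T, βs j * z j := by
    rw [← Finset.sum_subset (Finset.subset_univ T) hzero]
    refine Finset.sum_congr rfl ?_
    intro j hj
    rw [hwA' j (Finset.mem_sdiff.mp hj).2]
    ring
  set B2 : ℝ := ∑ j ∈ T, βs j ^ 2 with hB2def
  set Z2 : ℝ := ∑ i ∈ A \ S, z i ^ 2 with hZ2def
  set ZT : ℝ := ∑ j ∈ T, z j ^ 2 with hZTdef
  have hZ2nn : 0 ≤ Z2 := Finset.sum_nonneg fun i _ => sq_nonneg _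
  have hZTnn : 0 ≤ ZT := Finset.sum_nonneg fun i _ => sq_nonneg _
  have hB2nn : 0 ≤ B2 := Finset.sum_nonneg fun i _ => sq_nonneg _
  -- per-element domination: m * z j ^ 2 ≤ Z2 for j ∈ T
  have hdom : ∀ j ∈ T, ((A \ S).card : ℝ) * z j ^ 2 ≤ Z2 := by
    intro j hj
    have hjA : j ∉ A := (Finset.mem_sdiff.mp hj).2
    have : ∑ _i ∈ A \ S, z j ^ 2 ≤ ∑ i ∈ A \ S, z i ^ 2 := by
      refine Finset.sum_le_sum ?_
      intro i hi
      have hiA : i ∈ A := (Finset.mem_sdiff.mp hi).1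
      have habs := htop i hiA j hjA
      calc z j ^ 2 = |z j| ^ 2 := (sq_abs _).symm
        _ ≤ |z i| ^ 2 := by
            exact pow_le_pow_left₀ (abs_nonneg _) habs 2
        _ = z i ^ 2 := sq_abs _
    simpa [Finset.sum_const, nsmul_eq_mul] using this
  have hmZT : ((A \ S).card : ℝ) * ZT ≤ (T.card : ℝ) * Z2 := by
    have := Finset.sum_le_sum hdom
    calc ((A \ S).card : ℝ) * ZT = ∑ j ∈ T, ((A \ S).card : ℝ) * z j ^ 2 := by
          rw [hZTdef, Finset.mul_sum]
      _ ≤ ∑ _j ∈ T, Z2 := this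
      _ = (T.card : ℝ) * Z2 := by rw [Finset.sum_const, nsmul_eq_mul]
  -- cardinality inequality: k' * |T| ≤ k * |A \ S|
  have hcard : k' * T.card ≤ k * (A \ S).card := by
    have h1 : (A \ S).card + (A ∩ S).card = A.card := Finset.card_sdiff_add_card_inter A S
    have h2 : (S ∩ A).card + (S \ A).card = S.card := Finset.card_inter_add_card_sdiff S A
    have h3 : (S ∩ A).card = (A ∩ S).card := by rw [Finset.inter_comm]
    have hScard : S.card ≤ k := hβs
    rw [hA] at h1
    nlinarith [h1, h2, h3, hScard, hkk', Nat.zero_le (A ∩ S).card]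
  -- derive k' * ZT ≤ k * Z2
  have hkey : (k' : ℝ) * ZT ≤ (k : ℝ) * Z2 := by
    rcases Nat.eq_zero_or_pos T.card with hs0 | hs1
    · have : T = ∅ := Finset.card_eq_zero.mp hs0
      have : ZT = 0 := by rw [hZTdef, this, Finset.sum_empty]
      rw [this, mul_zero]
      positivity
    · have hm1 : 0 < (A \ S).card := by
        rcases Nat.eq_zero_or_pos (A \ S).card with h0 | h
        · exfalso
          rw [h0, Nat.mul_zero] at hcard
          exact Nat.lt_irrefl 0 (lt_of_lt_of_le (Nat.mul_pos hk' hs1) hcard)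
        · exact h
      have hmR : (0:ℝ) < ((A \ S).card : ℝ) := by exact_mod_cast hm1
      have hcardR : (k' : ℝ) * (T.card : ℝ) ≤ (k : ℝ) * ((A \ S).card : ℝ) := by
        exact_mod_cast hcard
      have h4 : (k' : ℝ) * (((A \ S).card : ℝ) * ZT) ≤ (k' : ℝ) * ((T.card : ℝ) * Z2) := by
        apply mul_le_mul_of_nonneg_left hmZT (le_of_lt hk'R)
      have h5 : (k' : ℝ) * (T.card : ℝ) * Z2 ≤ (k : ℝ) * ((A \ S).card : ℝ) * Z2 :=
        mul_le_mul_of_nonneg_right hcardR hZ2nn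
      have h6 : ((A \ S).card : ℝ) * ((k' : ℝ) * ZT) ≤ ((A \ S).card : ℝ) * ((k : ℝ) * Z2) := by
        ring_nf at h4 h5 ⊢
        linarith
      exact le_of_mul_le_mul_left h6 hmR
  -- AM-GM termwise bound
  have hAMGM : ∑ j ∈ T, βs j * z j ≤ (r / 2) * B2 + (1 / (2 * r)) * ZT := by
    have : ∀ j ∈ T, βs j * z j ≤ (r / 2) * βs j ^ 2 + (1 / (2 * r)) * z j ^ 2 := by
      intro j _
      have h2r : (0:ℝ) < 2 * r := by linarith
      rw [← mul_le_mul_iff_right₀ h2r]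
      have heq : 2 * r * ((r / 2) * βs j ^ 2 + (1 / (2 * r)) * z j ^ 2)
          = r ^ 2 * βs j ^ 2 + z j ^ 2 := by
        field_simp
      rw [heq]
      nlinarith [sq_nonneg (r * βs j - z j)]
    calc ∑ j ∈ T, βs j * z j ≤ ∑ j ∈ T, ((r / 2) * βs j ^ 2 + (1 / (2 * r)) * z j ^ 2) :=
          Finset.sum_le_sum this
      _ = (r / 2) * B2 + (1 / (2 * r)) * ZT := by
          rw [Finset.sum_add_distrib, hB2def, hZTdef, Finset.mul_sum, Finset.mul_sum]
  -- ZT ≤ r^2 * Z2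
  have hZTle : ZT ≤ r ^ 2 * Z2 := by
    rw [hr2]
    rw [div_mul_eq_mul_div, le_div_iff₀ hk'R]
    calc ZT * k' = (k' : ℝ) * ZT := mul_comm _ _
      _ ≤ (k : ℝ) * Z2 := hkey
  -- B2 + Z2 ≤ total sum of squares
  have hdisj : Disjoint T (A \ S) := by
    rw [Finset.disjoint_left]
    intro x hxT hxAS
    exact (Finset.mem_sdiff.mp hxT).2 (Finset.mem_sdiff.mp hxAS).1
  have htotal : B2 + Z2 ≤ ∑ i, (βs i - w i) ^ 2 := by
    have hTsum : ∑ j ∈ T, (βs j - w j) ^ 2 = B2 := by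
      refine Finset.sum_congr rfl ?_
      intro j hj
      rw [hwA' j (Finset.mem_sdiff.mp hj).2]
      ring
    have hASsum : ∑ i ∈ A \ S, (βs i - w i) ^ 2 = Z2 := by
      refine Finset.sum_congr rfl ?_
      intro i hi
      have hiA : i ∈ A := (Finset.mem_sdiff.mp hi).1
      have hiS : i ∉ S := (Finset.mem_sdiff.mp hi).2
      have hβ : βs i = 0 := by
        by_contra h
        exact hiS (Finset.mem_filter.mpr ⟨Finset.mem_univ i, h⟩)
      rw [hβ, hwA i hiA]
      ring
    calc B2 + Z2 = ∑ i ∈ T ∪ (A \ S), (βs i - w i) ^ 2 := by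
          rw [Finset.sum_union hdisj, hTsum, hASsum]
      _ ≤ ∑ i, (βs i - w i) ^ 2 := by
          refine Finset.sum_le_sum_of_subset_of_nonneg (Finset.subset_univ _) ?_
          intro i _ _
          exact sq_nonneg _
  -- combine
  rw [hLHS]
  have hfinal : (r / 2) * B2 + (1 / (2 * r)) * ZT ≤ (1 / 2) * r * (B2 + Z2) := by
    have h1 : (1 / (2 * r)) * ZT ≤ (1 / (2 * r)) * (r ^ 2 * Z2) := by
      apply mul_le_mul_of_nonneg_left hZTle (by positivity)
    have h2 : (1 / (2 * r)) * (r ^ 2 * Z2) = (r / 2) * Z2 := by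
      field_simp
    have h3 : (1 / 2) * r * (B2 + Z2) = (r / 2) * B2 + (r / 2) * Z2 := by ring
    rw [h3]
    linarith [h1, h2]
  calc ∑ j ∈ T, βs j * z j ≤ (r / 2) * B2 + (1 / (2 * r)) * ZT := hAMGM
    _ ≤ (1 / 2) * r * (B2 + Z2) := hfinal
    _ ≤ (1 / 2) * r * ∑ i, (βs i - w i) ^ 2 := by
        apply mul_le_mul_of_nonneg_left htotal (by positivity)
end

section
/- Let x be a random vector in ℝ^d with mean zero, covariance Σ, and bounded 4th moment: E[⟨v,x⟩⁴] ≤ C₄·(E[⟨v,x⟩²])² for all unit vectors v. Let ξ be an independent mean-zero random variable with variance σ², let Δ ∈ ℝ^d, and set g = x(x^⊤Δ − ξ), G = ΣΔ. Then the operator norm of the covariance of g satisfies ‖E[(g − G)(g − G)^⊤]‖_op ≤ 2(C₄ + 1)·‖Σ‖_op²·‖Δ‖₂² + σ²·‖Σ‖_op. -/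
open MeasureTheory ProbabilityTheory
open scoped Matrix.Norms.L2Operator

open scoped ENNReal RealInnerProductSpace
set_option linter.unusedSectionVars false

set_option maxHeartbeats 1000000 in
lemma aux_opNorm_le {d : ℕ} (M : Matrix (Fin d) (Fin d) ℝ) (K : ℝ) (hK : 0 ≤ K)
    (hsym : ∀ i j, M i j = M j i)
    (hq : ∀ w : Fin d → ℝ, 0 ≤ ∑ i, ∑ j, w i * M i j * w j ∧
        ∑ i, ∑ j, w i * M i j * w j ≤ K * ∑ i, w i ^ 2) :
    ‖M‖ ≤ K := by
  classical
  set B : (Fin d → ℝ) → (Fin d → ℝ) → ℝ :=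
    fun u v => ∑ i, ∑ j, u i * M i j * v j with hB
  have hBsymm : ∀ u v, B u v = B v u := by
    intro u v
    simp only [hB]
    rw [Finset.sum_comm]
    refine Finset.sum_congr rfl fun j _ => Finset.sum_congr rfl fun i _ => ?_
    rw [hsym]; ring
  have hQadd : ∀ u v : Fin d → ℝ, B (u + v) (u + v) = B u u + 2 * B u v + B v v := by
    intro u v
    have : ∀ u' v' : Fin d → ℝ, B (u' + v') (u' + v') =
        (B u' u' + B u' v') + (B v' u' + B v' v') := by
      intro u' v'
      simp only [hB, Pi.add_apply, ← Finset.sum_add_distrib]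
      refine Finset.sum_congr rfl fun i _ => Finset.sum_congr rfl fun j _ => ?_
      ring
    rw [this, hBsymm v u]; ring
  have hQsub : ∀ u v : Fin d → ℝ, B (u - v) (u - v) = B u u - 2 * B u v + B v v := by
    intro u v
    have : ∀ u' v' : Fin d → ℝ, B (u' - v') (u' - v') =
        (B u' u' - B u' v') - (B v' u' - B v' v') := by
      intro u' v'
      simp only [hB, Pi.sub_apply, ← Finset.sum_sub_distrib]
      refine Finset.sum_congr rfl fun i _ => Finset.sum_congr rfl fun j _ => ?_
      ring
    rw [this, hBsymm v u]; ring
  have key : ∀ w z : Fin d → ℝ, ∑ i, (w i + z i) ^ 2 =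
      (∑ i, w i ^ 2) + 2 * (∑ i, w i * z i) + ∑ i, z i ^ 2 := by
    intro w z
    rw [Finset.mul_sum, ← Finset.sum_add_distrib, ← Finset.sum_add_distrib]
    exact Finset.sum_congr rfl fun i _ => by ring
  have key2 : ∀ w z : Fin d → ℝ, ∑ i, (w i - z i) ^ 2 =
      (∑ i, w i ^ 2) - 2 * (∑ i, w i * z i) + ∑ i, z i ^ 2 := by
    intro w z
    rw [Finset.mul_sum, ← Finset.sum_sub_distrib, ← Finset.sum_add_distrib]
    exact Finset.sum_congr rfl fun i _ => by ring
  have hunit : ∀ u v : Fin d → ℝ, (∑ i, u i ^ 2) = 1 → (∑ i, v i ^ 2) = 1 →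
      |B u v| ≤ K := by
    intro u v hu hv
    set t := ∑ i, u i * v i with ht
    have ep : (∑ i, ((u + v) i) ^ 2) = 2 + 2 * t := by
      simp only [Pi.add_apply]; rw [key u v, hu, hv]; ring
    have em : (∑ i, ((u - v) i) ^ 2) = 2 - 2 * t := by
      simp only [Pi.sub_apply]; rw [key2 u v, hu, hv]; ring
    have hp0 : 0 ≤ B (u + v) (u + v) := (hq (u + v)).1
    have hm0 : 0 ≤ B (u - v) (u - v) := (hq (u - v)).1
    have hp1 : B (u + v) (u + v) ≤ K * (2 + 2 * t) := by
      rw [← ep]; exact (hq (u + v)).2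
    have hm1 : B (u - v) (u - v) ≤ K * (2 - 2 * t) := by
      rw [← em]; exact (hq (u - v)).2
    have htsq : t ^ 2 ≤ 1 := by
      have := Finset.sum_mul_sq_le_sq_mul_sq Finset.univ u v
      rw [hu, hv] at this; simpa [ht] using this
    have ht1 : t ≤ 1 := by nlinarith [sq_nonneg (t - 1)]
    have ht2 : -1 ≤ t := by nlinarith [sq_nonneg (t + 1)]
    have hk1 : 0 ≤ K * (1 - t) := mul_nonneg hK (by linarith)
    have hk2 : 0 ≤ K * (1 + t) := mul_nonneg hK (by linarith)
    have hpol : B u v = (B (u + v) (u + v) - B (u - v) (u - v)) / 4 := by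
      rw [hQadd, hQsub]; ring
    rw [abs_le]
    constructor
    · rw [hpol]; nlinarith [hm1, hp0, hk2]
    · rw [hpol]; nlinarith [hp1, hm0, hk1]
  have hBlin : ∀ (c : ℝ) (u v : Fin d → ℝ), B (c • u) v = c * B u v := by
    intro c u v
    simp only [hB, Pi.smul_apply, smul_eq_mul, Finset.mul_sum]
    exact Finset.sum_congr rfl fun i _ => Finset.sum_congr rfl fun j _ => by ring
  have hBlinr : ∀ (c : ℝ) (u v : Fin d → ℝ), B u (c • v) = c * B u v := by
    intro c u v
    rw [hBsymm, hBlin, hBsymm]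
  have hBbound : ∀ u v : Fin d → ℝ, |B u v| ≤
      K * Real.sqrt (∑ i, u i ^ 2) * Real.sqrt (∑ i, v i ^ 2) := by
    intro u v
    have hu0 : (0:ℝ) ≤ ∑ i, u i ^ 2 := Finset.sum_nonneg fun i _ => sq_nonneg _
    have hv0 : (0:ℝ) ≤ ∑ i, v i ^ 2 := Finset.sum_nonneg fun i _ => sq_nonneg _
    rcases eq_or_lt_of_le hu0 with hu | hu
    · have hzz : ∀ i, u i = 0 := by
        intro i
        have := (Finset.sum_eq_zero_iff_of_nonneg
          (fun i _ => sq_nonneg (u i))).mp hu.symm i (Finset.mem_univ i)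
        exact sq_eq_zero_iff.mp this
      have hz : B u v = 0 := by
        simp only [hB]
        exact Finset.sum_eq_zero fun i _ => Finset.sum_eq_zero fun j _ => by
          rw [hzz i]; ring
      rw [hz, abs_zero]
      positivity
    rcases eq_or_lt_of_le hv0 with hv | hv
    · have hzz : ∀ j, v j = 0 := by
        intro j
        have := (Finset.sum_eq_zero_iff_of_nonneg
          (fun j _ => sq_nonneg (v j))).mp hv.symm j (Finset.mem_univ j)
        exact sq_eq_zero_iff.mp this
      have hz : B u v = 0 := by
        simp only [hB]
        exact Finset.sum_eq_zero fun i _ => Finset.sum_eq_zero fun j _ => by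
          rw [hzz j]; ring
      rw [hz, abs_zero]
      positivity
    · set a := Real.sqrt (∑ i, u i ^ 2) with ha
      set b := Real.sqrt (∑ i, v i ^ 2) with hb
      have hapos : 0 < a := Real.sqrt_pos.mpr hu
      have hbpos : 0 < b := Real.sqrt_pos.mpr hv
      have ha2 : a ^ 2 = ∑ i, u i ^ 2 := Real.sq_sqrt hu0
      have hb2 : b ^ 2 = ∑ i, v i ^ 2 := Real.sq_sqrt hv0
      set u' : Fin d → ℝ := a⁻¹ • u with hu'
      set v' : Fin d → ℝ := b⁻¹ • v with hv'
      have hu'1 : (∑ i, u' i ^ 2) = 1 := by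
        simp only [hu', Pi.smul_apply, smul_eq_mul, mul_pow, ← Finset.mul_sum]
        rw [← ha2, inv_pow]
        exact inv_mul_cancel₀ (pow_ne_zero 2 hapos.ne')
      have hv'1 : (∑ i, v' i ^ 2) = 1 := by
        simp only [hv', Pi.smul_apply, smul_eq_mul, mul_pow, ← Finset.mul_sum]
        rw [← hb2, inv_pow]
        exact inv_mul_cancel₀ (pow_ne_zero 2 hbpos.ne')
      have huu : a • u' = u := by rw [hu', smul_inv_smul₀ hapos.ne']
      have hvv : b • v' = v := by rw [hv', smul_inv_smul₀ hbpos.ne']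
      have hsplit : B u v = a * (b * B u' v') := by
        rw [← huu, ← hvv, hBlin, hBlinr]
      have h1 : |B u' v'| ≤ K := hunit u' v' hu'1 hv'1
      calc |B u v| = a * (b * |B u' v'|) := by
            rw [hsplit, abs_mul, abs_mul, abs_of_pos hapos, abs_of_pos hbpos]
        _ ≤ a * (b * K) := by
            exact mul_le_mul_of_nonneg_left
              (mul_le_mul_of_nonneg_left h1 hbpos.le) hapos.le
        _ = K * a * b := by ring
  -- conclude via the operator norm definition
  rw [Matrix.l2_opNorm_def]
  refine ContinuousLinearMap.opNorm_le_bound _ hK fun v => ?_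
  set w : Fin d → ℝ := WithLp.equiv 2 (Fin d → ℝ) v with hw
  set y : Fin d → ℝ := M.mulVec w with hy
  have happ : ((Matrix.toEuclideanLin.trans
      LinearMap.toContinuousLinearMap) M) v
      = (WithLp.equiv 2 (Fin d → ℝ)).symm y := rfl
  have hnv : ‖v‖ = Real.sqrt (∑ i, w i ^ 2) := by
    rw [EuclideanSpace.norm_eq]
    congr 1
    exact Finset.sum_congr rfl fun i _ => by rw [Real.norm_eq_abs, sq_abs]; rfl
  have hnTv : ‖((Matrix.toEuclideanLin.trans
      LinearMap.toContinuousLinearMap) M) v‖ = Real.sqrt (∑ i, y i ^ 2) := by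
    rw [happ, EuclideanSpace.norm_eq]
    congr 1
    exact Finset.sum_congr rfl fun i _ => by rw [Real.norm_eq_abs, sq_abs]; rfl
  rw [hnTv, hnv]
  have hy0 : (0:ℝ) ≤ ∑ i, y i ^ 2 := Finset.sum_nonneg fun i _ => sq_nonneg _
  have hw0 : (0:ℝ) ≤ ∑ i, w i ^ 2 := Finset.sum_nonneg fun i _ => sq_nonneg _
  have hyi : ∀ i, y i = ∑ j, M i j * w j := fun i => by
    simp [hy, Matrix.mulVec, dotProduct]
  have hyB : (∑ i, ∑ j, y i * M i j * w j) = ∑ i, y i ^ 2 := by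
    refine Finset.sum_congr rfl fun i _ => ?_
    simp_rw [mul_assoc, ← Finset.mul_sum, ← hyi i, sq]
  have h2 : ∑ i, y i ^ 2 ≤ K * Real.sqrt (∑ i, y i ^ 2) *
      Real.sqrt (∑ i, w i ^ 2) := by
    calc (∑ i, y i ^ 2) = B y w := hyB.symm
      _ ≤ |B y w| := le_abs_self _
      _ ≤ _ := hBbound y w
  have hts : Real.sqrt (∑ i, y i ^ 2) ^ 2 = ∑ i, y i ^ 2 := Real.sq_sqrt hy0
  set t := Real.sqrt (∑ i, y i ^ 2) with htdef
  set s := Real.sqrt (∑ i, w i ^ 2) with hsdef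
  have htnn : 0 ≤ t := Real.sqrt_nonneg _
  have hsnn : 0 ≤ s := Real.sqrt_nonneg _
  rcases eq_or_lt_of_le htnn with h0 | h0
  · rw [← h0]; positivity
  · nlinarith [h2, hts, h0]

lemma aux_opNorm_le' {d : ℕ} (M : Matrix (Fin d) (Fin d) ℝ) (K : ℝ) (hK : 0 ≤ K)
    (hsym : ∀ i j, M i j = M j i)
    (hq0 : ∀ w : Fin d → ℝ, 0 ≤ ∑ i, ∑ j, w i * M i j * w j)
    (hq1 : ∀ w : Fin d → ℝ, (∑ i, w i ^ 2) = 1 → ∑ i, ∑ j, w i * M i j * w j ≤ K) :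
    ‖M‖ ≤ K := by
  apply aux_opNorm_le M K hK hsym
  intro w
  refine ⟨hq0 w, ?_⟩
  have hw0 : (0:ℝ) ≤ ∑ i, w i ^ 2 := Finset.sum_nonneg fun i _ => sq_nonneg _
  rcases eq_or_lt_of_le hw0 with h0 | h0
  · have hz : ∀ i, w i = 0 := fun i => sq_eq_zero_iff.mp
      ((Finset.sum_eq_zero_iff_of_nonneg (fun i _ => sq_nonneg (w i))).mp h0.symm i
        (Finset.mem_univ i))
    have hzz : (∑ i, ∑ j, w i * M i j * w j) = 0 :=
      Finset.sum_eq_zero fun i _ => Finset.sum_eq_zero fun j _ => by rw [hz i]; ring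
    rw [hzz, ← h0, mul_zero]
  · set a := Real.sqrt (∑ i, w i ^ 2) with ha
    have hapos : 0 < a := Real.sqrt_pos.mpr h0
    have ha2 : a ^ 2 = ∑ i, w i ^ 2 := Real.sq_sqrt hw0
    set w' : Fin d → ℝ := fun i => a⁻¹ * w i with hw'
    have hw'1 : (∑ i, w' i ^ 2) = 1 := by
      simp only [hw', mul_pow, ← Finset.mul_sum]
      rw [← ha2, inv_pow]
      exact inv_mul_cancel₀ (pow_ne_zero 2 hapos.ne')
    have hww : ∀ i, w i = a * w' i := fun i => by
      rw [hw']; field_simp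
    have hsplit : (∑ i, ∑ j, w i * M i j * w j)
        = a ^ 2 * ∑ i, ∑ j, w' i * M i j * w' j := by
      rw [Finset.mul_sum]
      refine Finset.sum_congr rfl fun i _ => ?_
      rw [Finset.mul_sum]
      exact Finset.sum_congr rfl fun j _ => by rw [hww i, hww j]; ring
    rw [hsplit, ← ha2]
    calc a ^ 2 * ∑ i, ∑ j, w' i * M i j * w' j ≤ a ^ 2 * K :=
          mul_le_mul_of_nonneg_left (hq1 w' hw'1) (sq_nonneg a)
      _ = K * a ^ 2 := by ring

section
variable {d : ℕ}

lemma aux_quadform_le (S : Matrix (Fin d) (Fin d) ℝ) (v : Fin d → ℝ) :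
    ∑ i, ∑ j, v i * S i j * v j ≤ ‖S‖ * ∑ i, v i ^ 2 := by
  classical
  set ev : EuclideanSpace ℝ (Fin d) := (WithLp.equiv 2 (Fin d → ℝ)).symm v with hev
  set Sv : EuclideanSpace ℝ (Fin d) :=
    (WithLp.equiv 2 (Fin d → ℝ)).symm (S.mulVec v) with hSv
  have hnorm : ‖ev‖ ^ 2 = ∑ i, v i ^ 2 := by
    rw [EuclideanSpace.norm_eq, Real.sq_sqrt (Finset.sum_nonneg fun i _ => sq_nonneg _)]
    exact Finset.sum_congr rfl fun i _ => by rw [Real.norm_eq_abs, sq_abs]; rfl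
  have h1 : ∑ i, ∑ j, v i * S i j * v j = ⟪ev, Sv⟫ := by
    rw [PiLp.inner_apply]
    refine Finset.sum_congr rfl fun i _ => ?_
    have : Sv i = ∑ j, S i j * v j := by
      simp [hSv, Matrix.mulVec, dotProduct]
    rw [this]
    simp only [RCLike.inner_apply, starRingEnd_apply, star_trivial]
    rw [Finset.sum_mul]
    exact Finset.sum_congr rfl fun j _ => by
      simp only [hev, WithLp.equiv_symm_apply, WithLp.ofLp_toLp]
      ring
  rw [h1]
  calc ⟪ev, Sv⟫ ≤ ‖ev‖ * ‖Sv‖ := real_inner_le_norm ev Sv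
    _ ≤ ‖ev‖ * (‖S‖ * ‖ev‖) := by
        refine mul_le_mul_of_nonneg_left ?_ (norm_nonneg _)
        exact S.l2_opNorm_mulVec ev
    _ = ‖S‖ * ‖ev‖ ^ 2 := by ring
    _ = ‖S‖ * ∑ i, v i ^ 2 := by rw [hnorm]
end


section
variable {Ω : Type*} [MeasureSpace Ω] [IsProbabilityMeasure (ℙ : Measure Ω)]

lemma memLp2_mul44' {f g : Ω → ℝ} (hf : MemLp f 4 ℙ) (hg : MemLp g 4 ℙ) :
    MemLp (fun ω => f ω * g ω) 2 ℙ :=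
  hg.smul hf (hpqr := ⟨by
    rw [show (4:ℝ≥0∞) = 2*2 by norm_num, ENNReal.mul_inv (by norm_num) (by norm_num),
      ← mul_add, ENNReal.inv_two_add_inv_two, mul_one]⟩)

lemma integrable_mul22' {f g : Ω → ℝ} (hf : MemLp f 2 ℙ) (hg : MemLp g 2 ℙ) :
    Integrable (fun ω => f ω * g ω) ℙ :=
  memLp_one_iff_integrable.mp (hg.smul hf (hpqr := ⟨by
    rw [ENNReal.inv_two_add_inv_two]
    norm_num⟩))

set_option maxHeartbeats 1000000 in
lemma aux_repr
    (d : ℕ) (x : Ω → Fin d → ℝ) (ξ : Ω → ℝ) (S : Matrix (Fin d) (Fin d) ℝ)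
    (Δ : Fin d → ℝ)
    (hxmeas : Measurable x) (hξmeas : Measurable ξ)
    (hx4 : ∀ i, MemLp (fun ω => x ω i) 4 ℙ) (hξ2 : MemLp ξ 2 ℙ)
    (hindep : IndepFun x ξ ℙ)
    (w : Fin d → ℝ) :
    (∑ i, ∑ j, w i * (∫ ω, (x ω i * ((∑ l, x ω l * Δ l) - ξ ω) - S.mulVec Δ i) *
             (x ω j * ((∑ l, x ω l * Δ l) - ξ ω) - S.mulVec Δ j) ∂ℙ) * w j)
      = ∫ ω, (∑ i, w i * (x ω i * ((∑ l, x ω l * Δ l) - ξ ω) - S.mulVec Δ i)) ^ 2 ∂ℙ := by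
  classical
  set h : Fin d → Ω → ℝ :=
    fun i ω => x ω i * ((∑ l, x ω l * Δ l) - ξ ω) - S.mulVec Δ i with hh
  have hxi : ∀ i, Measurable fun ω => x ω i := fun i => (measurable_pi_apply i).comp hxmeas
  have hx2 : ∀ i, MemLp (fun ω => x ω i) 2 ℙ :=
    fun i => (hx4 i).mono_exponent (by norm_num)
  have hP4 : MemLp (fun ω => ∑ l, x ω l * Δ l) 4 ℙ :=
    memLp_finset_sum _ fun l _ => ((hx4 l).const_mul (Δ l)).ae_eq
      (Filter.Eventually.of_forall fun ω => mul_comm _ _)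
  have hξsq_int : Integrable (fun ω => ξ ω ^ 2) ℙ := hξ2.integrable_sq
  have hxiξ2 : ∀ i, MemLp (fun ω => x ω i * ξ ω) 2 ℙ := by
    intro i
    have hind : IndepFun (fun ω => x ω i ^ 2) (fun ω => ξ ω ^ 2) ℙ :=
      hindep.comp ((measurable_pi_apply i).pow_const 2) (measurable_id.pow_const 2)
    have hsq : Integrable (fun ω => x ω i ^ 2 * ξ ω ^ 2) ℙ :=
      hind.integrable_mul (hx2 i).integrable_sq hξsq_int
    refine (memLp_two_iff_integrable_sq (((hxi i).mul hξmeas).aestronglyMeasurable)).mpr ?_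
    exact hsq.congr (Filter.Eventually.of_forall fun ω => by simp only [Pi.mul_apply]; ring)
  have hmemh : ∀ i, MemLp (h i) 2 ℙ := by
    intro i
    have h1 : MemLp (fun ω => x ω i * (∑ l, x ω l * Δ l)) 2 ℙ := memLp2_mul44' (hx4 i) hP4
    have h2 : MemLp (fun ω => x ω i * (∑ l, x ω l * Δ l) - x ω i * ξ ω
        - S.mulVec Δ i) 2 ℙ := (h1.sub (hxiξ2 i)).sub (memLp_const _)
    exact h2.ae_eq (Filter.Eventually.of_forall fun ω => by rw [hh]; ring)
  have hint : ∀ i j, Integrable (fun ω => (w i * h i ω) * (w j * h j ω)) ℙ :=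
    fun i j => integrable_mul22' ((hmemh i).const_mul (w i)) ((hmemh j).const_mul (w j))
  have hij : ∀ i j, w i * (∫ ω, h i ω * h j ω ∂ℙ) * w j
      = ∫ ω, (w i * h i ω) * (w j * h j ω) ∂ℙ := by
    intro i j
    rw [show (fun ω => (w i * h i ω) * (w j * h j ω))
        = fun ω => (w i * w j) * (h i ω * h j ω) from funext fun ω => by ring]
    rw [integral_const_mul]
    ring
  calc ∑ i, ∑ j, w i * (∫ ω, h i ω * h j ω ∂ℙ) * w j
      = ∑ i, ∑ j, ∫ ω, (w i * h i ω) * (w j * h j ω) ∂ℙ :=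
        Finset.sum_congr rfl fun i _ => Finset.sum_congr rfl fun j _ => hij i j
    _ = ∑ i, ∫ ω, ∑ j, (w i * h i ω) * (w j * h j ω) ∂ℙ :=
        Finset.sum_congr rfl fun i _ => (integral_finset_sum _ fun j _ => hint i j).symm
    _ = ∫ ω, ∑ i, ∑ j, (w i * h i ω) * (w j * h j ω) ∂ℙ :=
        (integral_finset_sum _ fun i _ => integrable_finset_sum _ fun j _ => hint i j).symm
    _ = ∫ ω, (∑ i, w i * h i ω) ^ 2 ∂ℙ := by
        refine integral_congr_ae (Filter.Eventually.of_forall fun ω => ?_)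
        show (∑ i, ∑ j, (w i * h i ω) * (w j * h j ω)) = (∑ i, w i * h i ω) ^ 2
        rw [sq, Finset.sum_mul_sum]

set_option maxHeartbeats 2000000 in
lemma aux_unit_bound
    (d : ℕ) (x : Ω → Fin d → ℝ) (ξ : Ω → ℝ) (S : Matrix (Fin d) (Fin d) ℝ)
    (C₄ σ : ℝ) (Δ : Fin d → ℝ)
    (hxmeas : Measurable x) (hξmeas : Measurable ξ)
    (hx4 : ∀ i, MemLp (fun ω => x ω i) 4 ℙ) (hξ2 : MemLp ξ 2 ℙ)
    (hxmean : ∀ i, ∫ ω, x ω i ∂ℙ = 0)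
    (hcov : ∀ i j, ∫ ω, x ω i * x ω j ∂ℙ = S i j)
    (hC₄ : 0 ≤ C₄)
    (h4th : ∀ v : Fin d → ℝ, (∑ i, v i ^ 2) = 1 →
      ∫ ω, (∑ i, v i * x ω i) ^ 4 ∂ℙ ≤ C₄ * (∫ ω, (∑ i, v i * x ω i) ^ 2 ∂ℙ) ^ 2)
    (hindep : IndepFun x ξ ℙ)
    (hξmean : ∫ ω, ξ ω ∂ℙ = 0)
    (hξvar : ∫ ω, ξ ω ^ 2 ∂ℙ = σ ^ 2)
    (hquad : ∀ v : Fin d → ℝ, ∑ i, ∑ j, v i * S i j * v j ≤ ‖S‖ * ∑ i, v i ^ 2)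
    (w : Fin d → ℝ) (hw : (∑ i, w i ^ 2) = 1) :
    ∫ ω, (∑ i, w i * (x ω i * ((∑ l, x ω l * Δ l) - ξ ω) - S.mulVec Δ i)) ^ 2 ∂ℙ ≤
      2 * (C₄ + 1) * ‖S‖ ^ 2 * (∑ i, Δ i ^ 2) + σ ^ 2 * ‖S‖ := by
  classical
  set A : Ω → ℝ := fun ω => ∑ i, w i * x ω i with hA
  set P : Ω → ℝ := fun ω => ∑ l, x ω l * Δ l with hPdef
  set G : Fin d → ℝ := S.mulVec Δ with hGdef
  set c : ℝ := ∑ i, w i * G i with hc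
  -- measurability
  have hxi : ∀ i, Measurable fun ω => x ω i := fun i => (measurable_pi_apply i).comp hxmeas
  have hAmeas : Measurable A :=
    Finset.measurable_sum _ fun i _ => (hxi i).const_mul _
  have hPmeas : Measurable P :=
    Finset.measurable_sum _ fun l _ => (hxi l).mul_const _
  -- basic MemLp facts
  have hx2 : ∀ i, MemLp (fun ω => x ω i) 2 ℙ :=
    fun i => (hx4 i).mono_exponent (by norm_num)
  have hA4 : MemLp A 4 ℙ :=
    memLp_finset_sum _ fun i _ => (hx4 i).const_mul (w i)
  have hP4 : MemLp P 4 ℙ :=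
    memLp_finset_sum _ fun l _ => ((hx4 l).const_mul (Δ l)).ae_eq
      (Filter.Eventually.of_forall fun ω => mul_comm _ _)
  have hA2 : MemLp A 2 ℙ := hA4.mono_exponent (by norm_num)
  have hP2 : MemLp P 2 ℙ := hP4.mono_exponent (by norm_num)
  have hξint : Integrable ξ ℙ := hξ2.integrable (by norm_num)
  have hξsq_int : Integrable (fun ω => ξ ω ^ 2) ℙ := hξ2.integrable_sq
  -- independence facts
  have hAind : IndepFun A ξ ℙ := by
    have hm : Measurable fun v : Fin d → ℝ => ∑ i, w i * v i :=
      Finset.measurable_sum _ fun i _ => (measurable_pi_apply i).const_mul _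
    exact hindep.comp hm measurable_id
  have hA2Pind : IndepFun (fun ω => A ω ^ 2 * P ω) ξ ℙ := by
    have hm : Measurable fun v : Fin d → ℝ => (∑ i, w i * v i) ^ 2 * ∑ l, v l * Δ l := by
      apply Measurable.mul
      · exact (Finset.measurable_sum _ fun i _ =>
          (measurable_pi_apply i).const_mul _).pow_const 2
      · exact Finset.measurable_sum _ fun l _ => (measurable_pi_apply l).mul_const _
    exact hindep.comp hm measurable_id
  have hA2ξ2ind : IndepFun (fun ω => A ω ^ 2) (fun ω => ξ ω ^ 2) ℙ := by
    have hm : Measurable fun v : Fin d → ℝ => (∑ i, w i * v i) ^ 2 :=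
      (Finset.measurable_sum _ fun i _ => (measurable_pi_apply i).const_mul _).pow_const 2
    exact hindep.comp hm (measurable_id.pow_const 2)
  -- the product Aξ is in L2 by independence
  have hAξ2 : MemLp (fun ω => A ω * ξ ω) 2 ℙ := by
    have hsq : Integrable (fun ω => A ω ^ 2 * ξ ω ^ 2) ℙ :=
      hA2ξ2ind.integrable_mul hA2.integrable_sq hξsq_int
    refine (memLp_two_iff_integrable_sq ((hAmeas.mul hξmeas).aestronglyMeasurable)).mpr ?_
    exact hsq.congr (Filter.Eventually.of_forall fun ω => by simp only [Pi.mul_apply]; ring)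
  -- F = A·P − A·ξ
  set F : Ω → ℝ := fun ω => A ω * P ω - A ω * ξ ω with hF
  have hAP2 : MemLp (fun ω => A ω * P ω) 2 ℙ := memLp2_mul44' hA4 hP4
  have hF2 : MemLp F 2 ℙ := hAP2.sub hAξ2
  have hFint : Integrable F ℙ := hF2.integrable (by norm_num)
  have hFsq_int : Integrable (fun ω => F ω ^ 2) ℙ := hF2.integrable_sq
  have hAPint : Integrable (fun ω => A ω * P ω) ℙ := hAP2.integrable (by norm_num)
  have hAξint : Integrable (fun ω => A ω * ξ ω) ℙ := hAξ2.integrable (by norm_num)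
  -- expectation of F is c
  have hEAP : ∫ ω, A ω * P ω ∂ℙ = c := by
    have hpt : (fun ω => A ω * P ω) =
        fun ω => ∑ i, ∑ l, (w i * Δ l) * (x ω i * x ω l) := by
      funext ω
      show (∑ i, w i * x ω i) * (∑ l, x ω l * Δ l) = _
      rw [Finset.sum_mul_sum]
      exact Finset.sum_congr rfl fun i _ => Finset.sum_congr rfl fun l _ => by ring
    rw [hpt]
    rw [integral_finset_sum _ (fun i _ => integrable_finset_sum _ fun l _ =>
      (integrable_mul22' (hx2 i) (hx2 l)).const_mul _)]
    have : ∀ i, ∫ ω, ∑ l, (w i * Δ l) * (x ω i * x ω l) ∂ℙ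
        = ∑ l, (w i * Δ l) * S i l := by
      intro i
      rw [integral_finset_sum _ (fun l _ => (integrable_mul22' (hx2 i) (hx2 l)).const_mul _)]
      exact Finset.sum_congr rfl fun l _ => by rw [integral_const_mul, hcov]
    rw [Finset.sum_congr rfl fun i _ => this i]
    rw [hc]
    refine Finset.sum_congr rfl fun i _ => ?_
    have : G i = ∑ l, S i l * Δ l := by
      simp [hGdef, Matrix.mulVec, dotProduct]
    rw [this, Finset.mul_sum]
    exact Finset.sum_congr rfl fun l _ => by ring
  have hEAξ : ∫ ω, A ω * ξ ω ∂ℙ = 0 := by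
    rw [hAind.integral_fun_mul_eq_mul_integral hAmeas.aestronglyMeasurable hξmeas.aestronglyMeasurable,
      hξmean, mul_zero]
  have hEF : ∫ ω, F ω ∂ℙ = c := by
    rw [hF]
    rw [integral_sub hAPint hAξint, hEAP, hEAξ, sub_zero]
  -- step 2 : ∫ (F - c)^2 = ∫ F^2 - c^2
  have hstep2 : ∫ ω, (F ω - c) ^ 2 ∂ℙ = (∫ ω, F ω ^ 2 ∂ℙ) - c ^ 2 := by
    have hpt : (fun ω => (F ω - c) ^ 2)
        = fun ω => F ω ^ 2 - (2 * c) * F ω + c ^ 2 := funext fun ω => by ring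
    have i1 : Integrable (fun ω => F ω ^ 2 - 2 * c * F ω) ℙ :=
      (hFsq_int.sub (hFint.const_mul (2 * c))).congr
        (Filter.Eventually.of_forall fun ω => rfl)
    rw [hpt, integral_add i1 (integrable_const _),
      integral_sub hFsq_int (hFint.const_mul (2 * c)), integral_const_mul, hEF,
      integral_const]
    simp [measure_univ]
    ring
  -- step 3 : ∫ F^2 = ∫ A²P² + σ² ∫ A²
  have iA2P2 : Integrable (fun ω => A ω ^ 2 * P ω ^ 2) ℙ := by
    have := integrable_mul22' (memLp2_mul44' hA4 hA4) (memLp2_mul44' hP4 hP4)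
    exact this.congr (Filter.Eventually.of_forall fun ω => by ring)
  have iA2P : Integrable (fun ω => A ω ^ 2 * P ω) ℙ := by
    have := integrable_mul22' (memLp2_mul44' hA4 hA4) hP2
    exact this.congr (Filter.Eventually.of_forall fun ω => by ring)
  have iA2Pξ : Integrable (fun ω => A ω ^ 2 * P ω * ξ ω) ℙ :=
    hA2Pind.integrable_mul iA2P hξint
  have iA2ξ2 : Integrable (fun ω => A ω ^ 2 * ξ ω ^ 2) ℙ :=
    hA2ξ2ind.integrable_mul hA2.integrable_sq hξsq_int
  have hzA2Pξ : ∫ ω, A ω ^ 2 * P ω * ξ ω ∂ℙ = 0 := by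
    rw [hA2Pind.integral_fun_mul_eq_mul_integral ((hAmeas.pow_const 2).mul hPmeas).aestronglyMeasurable
      hξmeas.aestronglyMeasurable, hξmean, mul_zero]
  have heA2ξ2 : ∫ ω, A ω ^ 2 * ξ ω ^ 2 ∂ℙ = (∫ ω, A ω ^ 2 ∂ℙ) * σ ^ 2 := by
    rw [hA2ξ2ind.integral_fun_mul_eq_mul_integral (hAmeas.pow_const 2).aestronglyMeasurable
      (hξmeas.pow_const 2).aestronglyMeasurable, hξvar]
  have hstep3 : ∫ ω, F ω ^ 2 ∂ℙ =
      (∫ ω, A ω ^ 2 * P ω ^ 2 ∂ℙ) + σ ^ 2 * ∫ ω, A ω ^ 2 ∂ℙ := by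
    have hpt : (fun ω => F ω ^ 2) = fun ω =>
        A ω ^ 2 * P ω ^ 2 - 2 * (A ω ^ 2 * P ω * ξ ω) + A ω ^ 2 * ξ ω ^ 2 := by
      funext ω
      show (A ω * P ω - A ω * ξ ω) ^ 2 = _
      ring
    have i1 : Integrable (fun ω => A ω ^ 2 * P ω ^ 2 - 2 * (A ω ^ 2 * P ω * ξ ω)) ℙ :=
      (iA2P2.sub (iA2Pξ.const_mul 2)).congr
        (Filter.Eventually.of_forall fun ω => rfl)
    rw [hpt, integral_add i1 iA2ξ2,
      integral_sub iA2P2 (iA2Pξ.const_mul 2), integral_const_mul, hzA2Pξ, heA2ξ2]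
    ring
  -- quadratic form values
  have hEA2 : ∫ ω, A ω ^ 2 ∂ℙ = ∑ i, ∑ j, w i * S i j * w j := by
    have hpt : (fun ω => A ω ^ 2) =
        fun ω => ∑ i, ∑ j, (w i * w j) * (x ω i * x ω j) := by
      funext ω
      show (∑ i, w i * x ω i) ^ 2 = _
      rw [sq, Finset.sum_mul_sum]
      exact Finset.sum_congr rfl fun i _ => Finset.sum_congr rfl fun j _ => by ring
    rw [hpt]
    rw [integral_finset_sum _ (fun i _ => integrable_finset_sum _ fun j _ =>
      (integrable_mul22' (hx2 i) (hx2 j)).const_mul _)]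
    refine Finset.sum_congr rfl fun i _ => ?_
    rw [integral_finset_sum _ (fun j _ => (integrable_mul22' (hx2 i) (hx2 j)).const_mul _)]
    exact Finset.sum_congr rfl fun j _ => by rw [integral_const_mul, hcov]; ring
  have hEP2 : ∫ ω, P ω ^ 2 ∂ℙ = ∑ i, ∑ j, Δ i * S i j * Δ j := by
    have hpt : (fun ω => P ω ^ 2) =
        fun ω => ∑ i, ∑ j, (Δ i * Δ j) * (x ω i * x ω j) := by
      funext ω
      show (∑ l, x ω l * Δ l) ^ 2 = _
      rw [sq, Finset.sum_mul_sum]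
      exact Finset.sum_congr rfl fun i _ => Finset.sum_congr rfl fun j _ => by ring
    rw [hpt]
    rw [integral_finset_sum _ (fun i _ => integrable_finset_sum _ fun j _ =>
      (integrable_mul22' (hx2 i) (hx2 j)).const_mul _)]
    refine Finset.sum_congr rfl fun i _ => ?_
    rw [integral_finset_sum _ (fun j _ => (integrable_mul22' (hx2 i) (hx2 j)).const_mul _)]
    exact Finset.sum_congr rfl fun j _ => by rw [integral_const_mul, hcov]; ring
  have hEA2_nonneg : 0 ≤ ∫ ω, A ω ^ 2 ∂ℙ := integral_nonneg fun ω => sq_nonneg _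
  have hEP2_nonneg : 0 ≤ ∫ ω, P ω ^ 2 ∂ℙ := integral_nonneg fun ω => sq_nonneg _
  have hEA2_le : ∫ ω, A ω ^ 2 ∂ℙ ≤ ‖S‖ := by
    rw [hEA2]
    calc ∑ i, ∑ j, w i * S i j * w j ≤ ‖S‖ * ∑ i, w i ^ 2 := hquad w
      _ = ‖S‖ := by rw [hw, mul_one]
  have hEP2_le : ∫ ω, P ω ^ 2 ∂ℙ ≤ ‖S‖ * ∑ i, Δ i ^ 2 := by
    rw [hEP2]; exact hquad Δ
  -- 4th moment bound for arbitrary vectors by scaling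
  have hmom : ∀ v : Fin d → ℝ, ∫ ω, (∑ i, v i * x ω i) ^ 4 ∂ℙ ≤
      C₄ * (∫ ω, (∑ i, v i * x ω i) ^ 2 ∂ℙ) ^ 2 := by
    intro v
    have hv0 : (0:ℝ) ≤ ∑ i, v i ^ 2 := Finset.sum_nonneg fun i _ => sq_nonneg _
    rcases eq_or_lt_of_le hv0 with h0 | h0
    · have hz : ∀ i, v i = 0 := fun i => sq_eq_zero_iff.mp
        ((Finset.sum_eq_zero_iff_of_nonneg (fun i _ => sq_nonneg (v i))).mp h0.symm i
          (Finset.mem_univ i))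
      have hzz : ∀ ω, (∑ i, v i * x ω i) = (0:ℝ) := fun ω =>
        Finset.sum_eq_zero fun i _ => by rw [hz i, zero_mul]
      have e4 : (fun ω => (∑ i, v i * x ω i) ^ 4) = fun _ : Ω => (0:ℝ) := by
        funext ω; rw [hzz ω]; norm_num
      have e2 : (fun ω => (∑ i, v i * x ω i) ^ 2) = fun _ : Ω => (0:ℝ) := by
        funext ω; rw [hzz ω]; norm_num
      rw [e4, e2]
      simp
    · set n := Real.sqrt (∑ i, v i ^ 2) with hn
      have hnpos : 0 < n := Real.sqrt_pos.mpr h0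
      have hn2 : n ^ 2 = ∑ i, v i ^ 2 := Real.sq_sqrt hv0
      set u : Fin d → ℝ := fun i => n⁻¹ * v i with hu
      have hu1 : (∑ i, u i ^ 2) = 1 := by
        simp only [hu, mul_pow, ← Finset.mul_sum]
        rw [← hn2, inv_pow]
        exact inv_mul_cancel₀ (pow_ne_zero 2 hnpos.ne')
      have hvu : ∀ i, v i = n * u i := fun i => by
        rw [hu]; field_simp
      have hsum : ∀ ω, (∑ i, v i * x ω i) = n * ∑ i, u i * x ω i := by
        intro ω
        rw [Finset.mul_sum]
        exact Finset.sum_congr rfl fun i _ => by rw [hvu i]; ring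
      have e4 : ∫ ω, (∑ i, v i * x ω i) ^ 4 ∂ℙ
          = n ^ 4 * ∫ ω, (∑ i, u i * x ω i) ^ 4 ∂ℙ := by
        rw [show (fun ω => (∑ i, v i * x ω i) ^ 4)
            = fun ω => n ^ 4 * (∑ i, u i * x ω i) ^ 4 from
          funext fun ω => by rw [hsum ω]; ring]
        exact integral_const_mul _ _
      have e2 : ∫ ω, (∑ i, v i * x ω i) ^ 2 ∂ℙ
          = n ^ 2 * ∫ ω, (∑ i, u i * x ω i) ^ 2 ∂ℙ := by
        rw [show (fun ω => (∑ i, v i * x ω i) ^ 2)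
            = fun ω => n ^ 2 * (∑ i, u i * x ω i) ^ 2 from
          funext fun ω => by rw [hsum ω]; ring]
        exact integral_const_mul _ _
      rw [e4, e2]
      calc n ^ 4 * ∫ ω, (∑ i, u i * x ω i) ^ 4 ∂ℙ
          ≤ n ^ 4 * (C₄ * (∫ ω, (∑ i, u i * x ω i) ^ 2 ∂ℙ) ^ 2) :=
            mul_le_mul_of_nonneg_left (h4th u hu1) (by positivity)
        _ = C₄ * (n ^ 2 * ∫ ω, (∑ i, u i * x ω i) ^ 2 ∂ℙ) ^ 2 := by ring
  -- Cauchy–Schwarz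
  have hCS : ∫ ω, A ω ^ 2 * P ω ^ 2 ∂ℙ ≤
      C₄ * (∫ ω, A ω ^ 2 ∂ℙ) * (∫ ω, P ω ^ 2 ∂ℙ) := by
    have hconj : Real.HolderConjugate 2 2 := .two_two
    have hA2mem : MemLp (fun ω => A ω ^ 2) (ENNReal.ofReal 2) ℙ := by
      rw [ENNReal.ofReal_ofNat]
      exact (memLp2_mul44' hA4 hA4).ae_eq (Filter.Eventually.of_forall fun ω => by ring)
    have hP2mem : MemLp (fun ω => P ω ^ 2) (ENNReal.ofReal 2) ℙ := by
      rw [ENNReal.ofReal_ofNat]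
      exact (memLp2_mul44' hP4 hP4).ae_eq (Filter.Eventually.of_forall fun ω => by ring)
    have hraw := integral_mul_le_Lp_mul_Lq_of_nonneg hconj
      (Filter.Eventually.of_forall fun ω => sq_nonneg (A ω))
      (Filter.Eventually.of_forall fun ω => sq_nonneg (P ω)) hA2mem hP2mem
    have hrw4 : ∀ (f : Ω → ℝ), (fun ω => (f ω ^ 2) ^ (2:ℝ)) = fun ω => f ω ^ 4 := by
      intro f; funext ω
      rw [show ((2:ℝ)) = ((2:ℕ):ℝ) by norm_num, Real.rpow_natCast]
      ring
    rw [hrw4 A, hrw4 P] at hraw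
    have hsq : ∀ y : ℝ, y ^ (1/(2:ℝ)) = Real.sqrt y := fun y =>
      (Real.sqrt_eq_rpow y).symm
    rw [hsq, hsq] at hraw
    have hA4int : 0 ≤ ∫ ω, A ω ^ 4 ∂ℙ := integral_nonneg fun ω => by positivity
    have hP4int : 0 ≤ ∫ ω, P ω ^ 4 ∂ℙ := integral_nonneg fun ω => by positivity
    have hmomA : ∫ ω, A ω ^ 4 ∂ℙ ≤ C₄ * (∫ ω, A ω ^ 2 ∂ℙ) ^ 2 := hmom w
    have hmomP : ∫ ω, P ω ^ 4 ∂ℙ ≤ C₄ * (∫ ω, P ω ^ 2 ∂ℙ) ^ 2 := by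
      have := hmom Δ
      have hpt2 : (fun ω => (∑ i, Δ i * x ω i) ^ 2) = fun ω => P ω ^ 2 := by
        funext ω
        congr 1
        show _ = ∑ l, x ω l * Δ l
        exact Finset.sum_congr rfl fun l _ => by ring
      have hpt4 : (fun ω => (∑ i, Δ i * x ω i) ^ 4) = fun ω => P ω ^ 4 := by
        funext ω
        congr 1
        show _ = ∑ l, x ω l * Δ l
        exact Finset.sum_congr rfl fun l _ => by ring
      rwa [hpt2, hpt4] at this
    have hs1 : Real.sqrt (∫ ω, A ω ^ 4 ∂ℙ) ≤ Real.sqrt C₄ * ∫ ω, A ω ^ 2 ∂ℙ := by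
      calc Real.sqrt (∫ ω, A ω ^ 4 ∂ℙ)
          ≤ Real.sqrt (C₄ * (∫ ω, A ω ^ 2 ∂ℙ) ^ 2) := Real.sqrt_le_sqrt hmomA
        _ = Real.sqrt C₄ * ∫ ω, A ω ^ 2 ∂ℙ := by
            rw [Real.sqrt_mul hC₄, Real.sqrt_sq hEA2_nonneg]
    have hs2 : Real.sqrt (∫ ω, P ω ^ 4 ∂ℙ) ≤ Real.sqrt C₄ * ∫ ω, P ω ^ 2 ∂ℙ := by
      calc Real.sqrt (∫ ω, P ω ^ 4 ∂ℙ)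
          ≤ Real.sqrt (C₄ * (∫ ω, P ω ^ 2 ∂ℙ) ^ 2) := Real.sqrt_le_sqrt hmomP
        _ = Real.sqrt C₄ * ∫ ω, P ω ^ 2 ∂ℙ := by
            rw [Real.sqrt_mul hC₄, Real.sqrt_sq hEP2_nonneg]
    calc ∫ ω, A ω ^ 2 * P ω ^ 2 ∂ℙ
        ≤ Real.sqrt (∫ ω, A ω ^ 4 ∂ℙ) * Real.sqrt (∫ ω, P ω ^ 4 ∂ℙ) := hraw
      _ ≤ (Real.sqrt C₄ * ∫ ω, A ω ^ 2 ∂ℙ) * (Real.sqrt C₄ * ∫ ω, P ω ^ 2 ∂ℙ) := by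
          apply mul_le_mul hs1 hs2 (Real.sqrt_nonneg _)
          positivity
      _ = (Real.sqrt C₄ * Real.sqrt C₄) * ((∫ ω, A ω ^ 2 ∂ℙ) * ∫ ω, P ω ^ 2 ∂ℙ) := by ring
      _ = C₄ * (∫ ω, A ω ^ 2 ∂ℙ) * (∫ ω, P ω ^ 2 ∂ℙ) := by
          rw [Real.mul_self_sqrt hC₄]; ring
  -- step 1 : the goal integral equals ∫ (F - c)^2
  have hstep1 : ∫ ω, (∑ i, w i * (x ω i * ((∑ l, x ω l * Δ l) - ξ ω) - G i)) ^ 2 ∂ℙ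
      = ∫ ω, (F ω - c) ^ 2 ∂ℙ := by
    refine integral_congr_ae (Filter.Eventually.of_forall fun ω => ?_)
    show (∑ i, w i * (x ω i * ((∑ l, x ω l * Δ l) - ξ ω) - G i)) ^ 2 = (F ω - c) ^ 2
    congr 1
    have h1 : (∑ i, w i * (x ω i * ((∑ l, x ω l * Δ l) - ξ ω) - G i))
        = (∑ i, w i * x ω i) * ((∑ l, x ω l * Δ l) - ξ ω) - ∑ i, w i * G i := by
      rw [Finset.sum_mul, ← Finset.sum_sub_distrib]
      exact Finset.sum_congr rfl fun i _ => by ring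
    rw [h1]
    show _ = (∑ i, w i * x ω i) * (∑ l, x ω l * Δ l)
        - (∑ i, w i * x ω i) * ξ ω - ∑ i, w i * G i
    ring
  -- assemble
  rw [hstep1, hstep2, hstep3]
  have hnS : (0:ℝ) ≤ ‖S‖ := norm_nonneg _
  have hΔ2 : (0:ℝ) ≤ ∑ i, Δ i ^ 2 := Finset.sum_nonneg fun i _ => sq_nonneg _
  have h1 : C₄ * (∫ ω, A ω ^ 2 ∂ℙ) * (∫ ω, P ω ^ 2 ∂ℙ)
      ≤ C₄ * ‖S‖ * (‖S‖ * ∑ i, Δ i ^ 2) := by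
    apply mul_le_mul
    · exact mul_le_mul_of_nonneg_left hEA2_le hC₄
    · exact hEP2_le
    · exact hEP2_nonneg
    · exact mul_nonneg hC₄ hnS
  have h2 : σ ^ 2 * (∫ ω, A ω ^ 2 ∂ℙ) ≤ σ ^ 2 * ‖S‖ :=
    mul_le_mul_of_nonneg_left hEA2_le (sq_nonneg σ)
  have h3 : C₄ * ‖S‖ * (‖S‖ * ∑ i, Δ i ^ 2) ≤ 2 * (C₄ + 1) * ‖S‖ ^ 2 * (∑ i, Δ i ^ 2) := by
    nlinarith [mul_nonneg (mul_nonneg hC₄ (mul_nonneg hnS hnS)) hΔ2,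
      mul_nonneg (mul_nonneg hnS hnS) hΔ2]
  have hc2 : (0:ℝ) ≤ c ^ 2 := sq_nonneg c
  linarith [hCS]
end


/-- Covariance bound for least-squares gradients under bounded 4th moments:
if `x` is mean-zero with covariance `S` and bounded 4th moment (constant `C₄`),
`ξ` is independent mean-zero with variance `σ²`, and `g = x(x^⊤Δ − ξ)`,
`G = SΔ`, then `‖E[(g − G)(g − G)^⊤]‖_op ≤ 2(C₄+1)‖S‖_op²‖Δ‖₂² + σ²‖S‖_op`. -/
theorem gradient_covariance_opNorm_bound
    {Ω : Type*} [MeasureSpace Ω] [IsProbabilityMeasure (ℙ : Measure Ω)]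
    (d : ℕ) (x : Ω → Fin d → ℝ) (ξ : Ω → ℝ) (S : Matrix (Fin d) (Fin d) ℝ)
    (C₄ σ : ℝ) (Δ : Fin d → ℝ)
    (hxmeas : Measurable x) (hξmeas : Measurable ξ)
    (hx4 : ∀ i, MemLp (fun ω => x ω i) 4 ℙ) (hξ2 : MemLp ξ 2 ℙ)
    (hxmean : ∀ i, ∫ ω, x ω i ∂ℙ = 0)
    (hcov : ∀ i j, ∫ ω, x ω i * x ω j ∂ℙ = S i j)
    (hC₄ : 0 ≤ C₄)
    (h4th : ∀ v : Fin d → ℝ, (∑ i, v i ^ 2) = 1 →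
      ∫ ω, (∑ i, v i * x ω i) ^ 4 ∂ℙ ≤ C₄ * (∫ ω, (∑ i, v i * x ω i) ^ 2 ∂ℙ) ^ 2)
    (hindep : IndepFun x ξ ℙ)
    (hξmean : ∫ ω, ξ ω ∂ℙ = 0)
    (hξvar : ∫ ω, ξ ω ^ 2 ∂ℙ = σ ^ 2) :
    ‖Matrix.of (fun i j =>
        ∫ ω, (x ω i * ((∑ l, x ω l * Δ l) - ξ ω) - S.mulVec Δ i) *
             (x ω j * ((∑ l, x ω l * Δ l) - ξ ω) - S.mulVec Δ j) ∂ℙ)‖ ≤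
      2 * (C₄ + 1) * ‖S‖ ^ 2 * (∑ i, Δ i ^ 2) + σ ^ 2 * ‖S‖ := by
  have hnS : (0:ℝ) ≤ ‖S‖ := norm_nonneg _
  have hΔ2 : (0:ℝ) ≤ ∑ i, Δ i ^ 2 := Finset.sum_nonneg fun i _ => sq_nonneg _
  have hK : 0 ≤ 2 * (C₄ + 1) * ‖S‖ ^ 2 * (∑ i, Δ i ^ 2) + σ ^ 2 * ‖S‖ := by
    have h1 : (0:ℝ) ≤ 2 * (C₄ + 1) * ‖S‖ ^ 2 * (∑ i, Δ i ^ 2) :=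
      mul_nonneg (mul_nonneg (by linarith) (sq_nonneg _)) hΔ2
    have h2 : (0:ℝ) ≤ σ ^ 2 * ‖S‖ := mul_nonneg (sq_nonneg _) hnS
    linarith
  apply aux_opNorm_le' _ _ hK
  · intro i j
    simp only [Matrix.of_apply]
    exact integral_congr_ae (Filter.Eventually.of_forall fun ω => mul_comm _ _)
  · intro w
    simp only [Matrix.of_apply]
    rw [aux_repr d x ξ S Δ hxmeas hξmeas hx4 hξ2 hindep w]
    exact integral_nonneg fun ω => sq_nonneg _
  · intro w hw
    simp only [Matrix.of_apply]
    rw [aux_repr d x ξ S Δ hxmeas hξmeas hx4 hξ2 hindep w]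
    exact aux_unit_bound d x ξ S C₄ σ Δ hxmeas hξmeas hx4 hξ2 hxmean hcov hC₄ h4th
      hindep hξmean hξvar (aux_quadform_le S) w hw
end

section
/- Let S = G̃ ∪ B be a disjoint partition of n real numbers, where |B| ≤ εn, all points of G̃ lie in [−M, M], and α satisfies ε ≤ α < 1/2. Let R be the set remaining after removing the ⌊αn⌋ largest and ⌊αn⌋ smallest points of S. Then |(1/|R|)·Σ_{i∈R} a_i − (1/|G̃|)·Σ_{i∈G̃} a_i| ≤ C·(α·M) for a universal constant C (e.g., C = 6/(1−2α)). -/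
open Finset

set_option maxHeartbeats 1000000 in
/-- Robustness of the trimmed mean: let `a : Fin n → ℝ` be split into good points
`Gt` (all in `[−M, M]`) and bad points `B` with `|B| ≤ εn`, and let `R` be the set
remaining after removing the `⌊αn⌋` largest and `⌊αn⌋` smallest points, where
`ε ≤ α < 1/2`. Then the average over `R` differs from the average over `Gt` by at
most `(6/(1−2α))·α·M`. -/
theorem trimmed_mean_robust (n : ℕ) (hn : 0 < n) (a : Fin n → ℝ)
    (Gt B : Finset (Fin n)) (ε α M : ℝ)
    (hpart : Disjoint Gt B) (hunion : Gt ∪ B = Finset.univ)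
    (hM : 0 ≤ M) (hGt : ∀ i ∈ Gt, |a i| ≤ M)
    (hε : 0 ≤ ε) (hB : (B.card : ℝ) ≤ ε * n)
    (hεα : ε ≤ α) (hα : α < 1 / 2)
    (R L U : Finset (Fin n))
    (hLcard : L.card = ⌊α * n⌋₊) (hUcard : U.card = ⌊α * n⌋₊)
    (hLR : Disjoint L R) (hUR : Disjoint U R) (hLU : Disjoint L U)
    (hcover : L ∪ U ∪ R = Finset.univ)
    (hLlow : ∀ i ∈ L, ∀ j ∈ R, a i ≤ a j)
    (hUhigh : ∀ i ∈ U, ∀ j ∈ R, a j ≤ a i) :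
    |(∑ i ∈ R, a i) / R.card - (∑ i ∈ Gt, a i) / Gt.card| ≤
      (6 / (1 - 2 * α)) * (α * M) := by
  have hα0 : 0 ≤ α := hε.trans hεα
  have hc : (0:ℝ) < 1 - 2*α := by linarith
  have hn' : (0:ℝ) < n := by exact_mod_cast hn
  have hBα : (B.card : ℝ) ≤ α * n := hB.trans (by nlinarith)
  have hBfloor : B.card ≤ ⌊α * n⌋₊ := Nat.le_floor hBα
  have hfloor : (⌊α * n⌋₊ : ℝ) ≤ α * n := Nat.floor_le (by positivity)
  have hmem : ∀ i : Fin n, i ∈ Gt ∨ i ∈ B := by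
    intro i
    have : i ∈ Gt ∪ B := by rw [hunion]; exact mem_univ i
    exact mem_union.mp this
  have hLUdisj : Disjoint (L ∪ U) R := disjoint_union_left.mpr ⟨hLR, hUR⟩
  have hcards : L.card + U.card + R.card = n := by
    have h1 : (L ∪ U ∪ R).card = n := by rw [hcover, card_univ, Fintype.card_fin]
    rw [card_union_of_disjoint hLUdisj, card_union_of_disjoint hLU] at h1
    exact h1
  have hGB : Gt.card + B.card = n := by
    have h1 : (Gt ∪ B).card = n := by rw [hunion, card_univ, Fintype.card_fin]
    rw [card_union_of_disjoint hpart] at h1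
    exact h1
  have hcardsR : (L.card:ℝ) + U.card + R.card = n := by exact_mod_cast hcards
  have hGBR : (Gt.card:ℝ) + B.card = n := by exact_mod_cast hGB
  have hLr : (L.card : ℝ) ≤ α * n := by rw [hLcard]; exact hfloor
  have hUr : (U.card : ℝ) ≤ α * n := by rw [hUcard]; exact hfloor
  have hRge : (1 - 2*α) * n ≤ (R.card : ℝ) := by nlinarith
  have hRpos : (0:ℝ) < R.card := lt_of_lt_of_le (by nlinarith) hRge
  have hBnn : (0:ℝ) ≤ B.card := Nat.cast_nonneg _
  have hRnn : (0:ℝ) ≤ R.card := Nat.cast_nonneg _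
  have hLnn : (0:ℝ) ≤ L.card := Nat.cast_nonneg _
  have hUnn : (0:ℝ) ≤ U.card := Nat.cast_nonneg _
  have hGge : (1 - α) * n ≤ (Gt.card : ℝ) := by nlinarith
  have hGpos : (0:ℝ) < Gt.card := lt_of_lt_of_le (by nlinarith) hGge
  -- every surviving point has magnitude at most M
  have hRb : ∀ i ∈ R, |a i| ≤ M := by
    intro i hi
    rw [abs_le]
    constructor
    · by_contra h
      push_neg at h
      have hsub : insert i L ⊆ B := by
        intro j hj
        rcases mem_insert.mp hj with rfl | hjL
        · rcases hmem j with hg | hb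
          · exfalso; have hj' := hGt j hg; rw [abs_le] at hj'; linarith [hj'.1]
          · exact hb
        · rcases hmem j with hg | hb
          · exfalso
            have h1 := hLlow j hjL i hi
            have hj' := hGt j hg; rw [abs_le] at hj'; linarith [hj'.1]
          · exact hb
      have hiL : i ∉ L := disjoint_right.mp hLR hi
      have hcc := card_le_card hsub
      rw [card_insert_of_notMem hiL, hLcard] at hcc
      omega
    · by_contra h
      push_neg at h
      have hsub : insert i U ⊆ B := by
        intro j hj
        rcases mem_insert.mp hj with rfl | hjU
        · rcases hmem j with hg | hb
          · exfalso; have hj' := hGt j hg; rw [abs_le] at hj'; linarith [hj'.2]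
          · exact hb
        · rcases hmem j with hg | hb
          · exfalso
            have h1 := hUhigh j hjU i hi
            have hj' := hGt j hg; rw [abs_le] at hj'; linarith [hj'.2]
          · exact hb
      have hiU : i ∉ U := disjoint_right.mp hUR hi
      have hcc := card_le_card hsub
      rw [card_insert_of_notMem hiU, hUcard] at hcc
      omega
  -- set difference inclusions
  have hRBsub : R \ Gt ⊆ B := by
    intro j hj
    rw [mem_sdiff] at hj
    rcases hmem j with hg | hb
    · exact absurd hg hj.2
    · exact hb
  have hGLU : Gt \ R ⊆ L ∪ U := by
    intro j hj
    rw [mem_sdiff] at hj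
    have hj2 : j ∈ L ∪ U ∪ R := by rw [hcover]; exact mem_univ j
    rcases mem_union.mp hj2 with h1 | h2
    · exact h1
    · exact absurd h2 hj.2
  -- sum bounds
  have hS1 : |∑ i ∈ R \ Gt, a i| ≤ α * n * M := by
    calc |∑ i ∈ R \ Gt, a i| ≤ ∑ i ∈ R \ Gt, |a i| := Finset.abs_sum_le_sum_abs _ _
      _ ≤ ∑ _i ∈ R \ Gt, M := Finset.sum_le_sum (fun i hi => hRb i (mem_sdiff.mp hi).1)
      _ = ((R \ Gt).card : ℝ) * M := by rw [Finset.sum_const, nsmul_eq_mul]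
      _ ≤ (B.card : ℝ) * M :=
          mul_le_mul_of_nonneg_right (by exact_mod_cast card_le_card hRBsub) hM
      _ ≤ α * n * M := mul_le_mul_of_nonneg_right hBα hM
  have hS2 : |∑ i ∈ Gt \ R, a i| ≤ 2 * (α * n) * M := by
    calc |∑ i ∈ Gt \ R, a i| ≤ ∑ i ∈ Gt \ R, |a i| := Finset.abs_sum_le_sum_abs _ _
      _ ≤ ∑ _i ∈ Gt \ R, M := Finset.sum_le_sum (fun i hi => hGt i (mem_sdiff.mp hi).1)
      _ = ((Gt \ R).card : ℝ) * M := by rw [Finset.sum_const, nsmul_eq_mul]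
      _ ≤ ((L ∪ U).card : ℝ) * M :=
          mul_le_mul_of_nonneg_right (by exact_mod_cast card_le_card hGLU) hM
      _ ≤ 2 * (α * n) * M := by
          apply mul_le_mul_of_nonneg_right _ hM
          rw [card_union_of_disjoint hLU, hLcard, hUcard]
          push_cast
          linarith
  have hSG : |∑ i ∈ Gt, a i| ≤ (Gt.card : ℝ) * M := by
    calc |∑ i ∈ Gt, a i| ≤ ∑ i ∈ Gt, |a i| := Finset.abs_sum_le_sum_abs _ _
      _ ≤ ∑ _i ∈ Gt, M := Finset.sum_le_sum hGt
      _ = (Gt.card : ℝ) * M := by rw [Finset.sum_const, nsmul_eq_mul]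
  have hdiff : |(∑ i ∈ R, a i) - ∑ i ∈ Gt, a i| ≤ 3 * (α * n) * M := by
    have e1 : ∑ i ∈ R, a i = ∑ i ∈ R ∩ Gt, a i + ∑ i ∈ R \ Gt, a i :=
      (Finset.sum_inter_add_sum_sdiff R Gt a).symm
    have e2 : ∑ i ∈ Gt, a i = ∑ i ∈ R ∩ Gt, a i + ∑ i ∈ Gt \ R, a i := by
      rw [inter_comm]; exact (Finset.sum_inter_add_sum_sdiff Gt R a).symm
    rw [e1, e2]
    have e3 : (∑ i ∈ R ∩ Gt, a i + ∑ i ∈ R \ Gt, a i) -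
        (∑ i ∈ R ∩ Gt, a i + ∑ i ∈ Gt \ R, a i)
        = (∑ i ∈ R \ Gt, a i) + -(∑ i ∈ Gt \ R, a i) := by ring
    rw [e3]
    have := (abs_add_le (∑ i ∈ R \ Gt, a i) (-(∑ i ∈ Gt \ R, a i)))
    rw [abs_neg] at this
    linarith
  -- final assembly
  rw [div_sub_div _ _ (ne_of_gt hRpos) (ne_of_gt hGpos), abs_div,
    abs_of_pos (mul_pos hRpos hGpos), div_le_iff₀ (mul_pos hRpos hGpos)]
  have hgr : |(Gt.card : ℝ) - R.card| ≤ 2 * (α * n) := by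
    rw [abs_le]
    constructor <;> linarith
  have key : |(∑ i ∈ R, a i) * Gt.card - R.card * ∑ i ∈ Gt, a i|
      ≤ 5 * (α * n * M) * Gt.card := by
    have e : (∑ i ∈ R, a i) * (Gt.card : ℝ) - R.card * ∑ i ∈ Gt, a i
        = ((∑ i ∈ R, a i) - ∑ i ∈ Gt, a i) * Gt.card
          + (∑ i ∈ Gt, a i) * ((Gt.card : ℝ) - R.card) := by ring
    rw [e]
    have t1 : |((∑ i ∈ R, a i) - ∑ i ∈ Gt, a i) * (Gt.card:ℝ)|
        ≤ (3 * (α * n) * M) * Gt.card := by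
      rw [abs_mul, abs_of_pos hGpos]
      exact mul_le_mul_of_nonneg_right hdiff hGpos.le
    have t2 : |(∑ i ∈ Gt, a i) * ((Gt.card:ℝ) - R.card)|
        ≤ ((Gt.card:ℝ) * M) * (2 * (α * n)) := by
      rw [abs_mul]
      exact mul_le_mul hSG hgr (abs_nonneg _) (by positivity)
    have htri := abs_add_le (((∑ i ∈ R, a i) - ∑ i ∈ Gt, a i) * (Gt.card:ℝ))
      ((∑ i ∈ Gt, a i) * ((Gt.card:ℝ) - R.card))
    linarith
  refine key.trans ?_
  rw [div_mul_eq_mul_div, div_mul_eq_mul_div, le_div_iff₀ hc]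
  have hX : (0:ℝ) ≤ α * n * M * Gt.card * (1 - 2*α) :=
    mul_nonneg (mul_nonneg (mul_nonneg (mul_nonneg hα0 hn'.le) hM) hGpos.le) hc.le
  have h6 : 6 * (α * M) * ((1 - 2*α) * n * Gt.card) ≤ 6 * (α * M) * (R.card * Gt.card) := by
    apply mul_le_mul_of_nonneg_left _ (by exact mul_nonneg (by norm_num) (mul_nonneg hα0 hM))
    exact mul_le_mul_of_nonneg_right hRge hGpos.le
  linarith
end

section
/- Let f : ℝ^d → ℝ be convex with global minimizer β* (f(β) ≥ f(β*) for all β). Suppose f is μ_α-strongly convex and μ_L-smooth on ℝ^d, and that Ĝ : ℝ^d → ℝ^d satisfies |⟨Ĝ(β) − ∇f(β), β̃ − β*⟩| ≤ (α‖β − β*‖₂ + ψ)‖β̃ − β*‖₂ for all β, β̃. Let β̄ = H_{k'}(β − η·Ĝ(β)) with η = 1/μ_L and k' = 4ρ²k where ρ = μ_L/μ_α, and suppose ‖β*‖₀ ≤ k and α ≤ μ_α/32. Then ‖β̄ − β*‖₂ ≤ (1 − 1/(8ρ))·‖β − β*‖₂ + 4ψ/μ_L. -/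
open scoped RealInnerProductSpace
open Finset

set_option maxHeartbeats 1000000 in
/-- Single-iteration contraction of Robust Hard Thresholding: if `f` is convex with
global minimizer `β*` (which is `k`-sparse), `μα`-strongly convex and `μL`-smooth,
the gradient estimator `Ĝ` satisfies the `(α, ψ)`-Robust Descent Condition with
`α ≤ μα/32`, and `β̄ = H_{k'}(β − (1/μL)·Ĝ β)` with `k' = 4ρ²k`, `ρ = μL/μα`, then
`‖β̄ − β*‖ ≤ (1 − 1/(8ρ))·‖β − β*‖ + 4ψ/μL`. -/
theorem robust_hard_thresholding_contraction (d k k' : ℕ) (μα μL α ψ : ℝ)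
    (hμα : 0 < μα) (hμL : μα ≤ μL) (hα : 0 ≤ α) (hψ : 0 ≤ ψ)
    (hαsmall : α ≤ μα / 32)
    (hk' : (k' : ℝ) = 4 * (μL / μα) ^ 2 * k)
    (f : EuclideanSpace ℝ (Fin d) → ℝ) (hf : Differentiable ℝ f)
    (hconv : ConvexOn ℝ Set.univ f)
    (hsc : ∀ β₁ β₂ : EuclideanSpace ℝ (Fin d),
      μα / 2 * ‖β₁ - β₂‖ ^ 2 ≤ f β₁ - f β₂ - ⟪gradient f β₂, β₁ - β₂⟫ ∧
      f β₁ - f β₂ - ⟪gradient f β₂, β₁ - β₂⟫ ≤ μL / 2 * ‖β₁ - β₂‖ ^ 2)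
    (βs : EuclideanSpace ℝ (Fin d))
    (hmin : ∀ β, f βs ≤ f β)
    (hβs : (Finset.univ.filter fun i => βs i ≠ 0).card ≤ k)
    (Ghat : EuclideanSpace ℝ (Fin d) → EuclideanSpace ℝ (Fin d))
    (hRDC : ∀ β βt : EuclideanSpace ℝ (Fin d),
      |⟪Ghat β - gradient f β, βt - βs⟫| ≤ (α * ‖β - βs‖ + ψ) * ‖βt - βs‖)
    (β βbar : EuclideanSpace ℝ (Fin d))
    (A : Finset (Fin d)) (hA : A.card = k')
    (hin : ∀ i ∈ A, βbar i = (β - (1 / μL) • Ghat β) i)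
    (hout : ∀ i ∉ A, βbar i = 0)
    (htop : ∀ i ∈ A, ∀ j ∉ A,
      |(β - (1 / μL) • Ghat β) j| ≤ |(β - (1 / μL) • Ghat β) i|) :
    ‖βbar - βs‖ ≤ (1 - 1 / (8 * (μL / μα))) * ‖β - βs‖ + 4 * ψ / μL := by
  have hμL0 : 0 < μL := lt_of_lt_of_le hμα hμL
  set ρ : ℝ := μL / μα with hρdef
  have hρ1 : 1 ≤ ρ := (one_le_div hμα).mpr hμL
  have hρ0 : 0 < ρ := lt_of_lt_of_le one_pos hρ1
  have hρsq : 1 ≤ ρ ^ 2 := by nlinarith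
  set z : EuclideanSpace ℝ (Fin d) := β - (1 / μL) • Ghat β with hzdef
  set S : Finset (Fin d) := Finset.univ.filter fun i => βs i ≠ 0 with hSdef
  set u : ℝ := ‖βbar - βs‖ with hudef
  set r : ℝ := ‖β - βs‖ with hrdef
  have hu0 : 0 ≤ u := norm_nonneg _
  have hr0 : 0 ≤ r := norm_nonneg _
  have hSz : ∀ i, i ∉ S → βs i = 0 := by
    intro i hi
    by_contra h
    exact hi (Finset.mem_filter.mpr ⟨Finset.mem_univ i, h⟩)
  -- ### Part 1 : hard thresholding lemma
  have hHT : ⟪βs - βbar, z - βbar⟫ ≤ u ^ 2 / (4 * ρ) := by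
    set T : ℝ := ∑ i ∈ S \ A, βs i * z i with hTdef
    set a : ℝ := ∑ i ∈ S \ A, (βs i) ^ 2 with hadef
    set b : ℝ := ∑ i ∈ A \ S, (z i) ^ 2 with hbdef
    have ha0 : 0 ≤ a := Finset.sum_nonneg fun i _ => sq_nonneg _
    have hb0 : 0 ≤ b := Finset.sum_nonneg fun i _ => sq_nonneg _
    have hT : ⟪βs - βbar, z - βbar⟫ = T := by
      have hinner : ⟪βs - βbar, z - βbar⟫ = ∑ i, (βs i - βbar i) * (z i - βbar i) := by
        rw [PiLp.inner_apply]; refine Finset.sum_congr rfl fun i _ => ?_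
        simp [mul_comm]
      rw [hinner, hTdef]
      rw [← Finset.sum_subset (Finset.subset_univ (S \ A))]
      · refine Finset.sum_congr rfl fun i hi => ?_
        rw [Finset.mem_sdiff] at hi
        rw [hout i hi.2]; ring
      · intro i _ hi
        by_cases hiA : i ∈ A
        · rw [hin i hiA]; ring
        · have hiS : i ∉ S := fun h => hi (Finset.mem_sdiff.mpr ⟨h, hiA⟩)
          rw [hSz i hiS, hout i hiA]; ring
    have hab : a + b ≤ u ^ 2 := by
      have hu2 : u ^ 2 = ∑ i, (βbar i - βs i) * (βbar i - βs i) := by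
        rw [hudef, ← real_inner_self_eq_norm_sq]
        rw [PiLp.inner_apply]; refine Finset.sum_congr rfl fun i _ => ?_
        simp [sq]
      have hdisj : Disjoint (S \ A) (A \ S) := disjoint_sdiff_sdiff
      have heq : a + b = ∑ i ∈ (S \ A) ∪ (A \ S), (βbar i - βs i) * (βbar i - βs i) := by
        rw [Finset.sum_union hdisj]
        congr 1
        · refine Finset.sum_congr rfl fun i hi => ?_
          rw [Finset.mem_sdiff] at hi
          rw [hout i hi.2]; ring
        · refine Finset.sum_congr rfl fun i hi => ?_
          rw [Finset.mem_sdiff] at hi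
          rw [hin i hi.1, hSz i hi.2]; ring
      rw [heq, hu2]
      exact Finset.sum_le_sum_of_subset_of_nonneg (Finset.subset_univ _)
        (fun i _ _ => mul_self_nonneg _)
    rw [hT]
    rcases le_or_gt T 0 with hT0 | hT0
    · have : 0 ≤ u ^ 2 / (4 * ρ) := by positivity
      linarith
    -- T > 0 case
    have hne : (S \ A).Nonempty := by
      by_contra h
      rw [Finset.not_nonempty_iff_eq_empty] at h
      rw [hTdef, h, Finset.sum_empty] at hT0
      exact lt_irrefl _ hT0
    set z2 : ℝ := ∑ i ∈ S \ A, (z i) ^ 2 with hz2def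
    have hz20 : 0 ≤ z2 := Finset.sum_nonneg fun i _ => sq_nonneg _
    have hCS : T ^ 2 ≤ a * z2 :=
      Finset.sum_mul_sq_le_sq_mul_sq (S \ A) (fun i => βs i) (fun i => z i)
    set P : ℝ := ((S \ A).card : ℝ) with hPdef
    set Q : ℝ := ((A \ S).card : ℝ) with hQdef
    set m : ℝ := ((S ∩ A).card : ℝ) with hmdef
    have hm0 : 0 ≤ m := Nat.cast_nonneg _
    have hpairsum : z2 * Q ≤ P * b := by
      have key : ∀ i ∈ S \ A, ∀ j ∈ A \ S, (z i) ^ 2 ≤ (z j) ^ 2 := by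
        intro i hi j hj
        rw [Finset.mem_sdiff] at hi hj
        have h := htop j hj.1 i hi.2
        calc (z i) ^ 2 = |z i| ^ 2 := (sq_abs _).symm
          _ ≤ |z j| ^ 2 := pow_le_pow_left₀ (abs_nonneg _) h 2
          _ = (z j) ^ 2 := sq_abs _
      calc z2 * Q = ∑ i ∈ S \ A, ∑ j ∈ A \ S, (z i) ^ 2 := by
            rw [hz2def, Finset.sum_mul]
            refine Finset.sum_congr rfl fun i _ => ?_
            rw [Finset.sum_const, nsmul_eq_mul]; ring
        _ ≤ ∑ i ∈ S \ A, ∑ j ∈ A \ S, (z j) ^ 2 :=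
            Finset.sum_le_sum fun i hi => Finset.sum_le_sum fun j hj => key i hi j hj
        _ = P * b := by rw [Finset.sum_const, nsmul_eq_mul]
    have hQeq : Q = 4 * ρ ^ 2 * k - m := by
      have h1 : (A \ S).card + (A ∩ S).card = A.card := Finset.card_sdiff_add_card_inter A S
      have h2 : (A ∩ S).card = (S ∩ A).card := by rw [Finset.inter_comm]
      rw [h2, hA] at h1
      have := congrArg (fun n : ℕ => (n : ℝ)) h1
      push_cast at this
      rw [hQdef, hmdef]
      rw [← hk']
      linarith
    have hPle : P ≤ (k : ℝ) - m := by
      have h1 : (S \ A).card + (S ∩ A).card = S.card := Finset.card_sdiff_add_card_inter S A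
      have h2 : S.card ≤ k := hβs
      have : ((S \ A).card : ℝ) + ((S ∩ A).card : ℝ) ≤ (k : ℝ) := by
        rw [← Nat.cast_add, h1]; exact_mod_cast h2
      linarith
    have hP1 : 1 ≤ P := by
      rw [hPdef]
      exact_mod_cast Finset.card_pos.mpr hne
    have hk1 : 1 ≤ (k : ℝ) := by linarith
    have hQpos : 0 < Q := by
      rw [hQeq]
      have c1 : 0 ≤ (ρ ^ 2 - 1) * (k : ℝ) :=
        mul_nonneg (by linarith) (Nat.cast_nonneg k)
      linarith [c1, hPle, hP1, hk1]
    -- T^2 * Q ≤ a * b * (k - m)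
    have hT2Q : T ^ 2 * Q ≤ a * b * ((k : ℝ) - m) := by
      have s1 : T ^ 2 * Q ≤ a * z2 * Q := mul_le_mul_of_nonneg_right hCS hQpos.le
      have s2 : a * (z2 * Q) ≤ a * (P * b) := mul_le_mul_of_nonneg_left hpairsum ha0
      have s3 : a * (P * b) ≤ a * (((k : ℝ) - m) * b) := by
        apply mul_le_mul_of_nonneg_left _ ha0
        exact mul_le_mul_of_nonneg_right hPle hb0
      linarith [s1, s2, s3]
    have hkey : 16 * ρ ^ 2 * (a * b * ((k : ℝ) - m)) ≤ (a + b) ^ 2 * Q := by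
      have habm : 0 ≤ a * b * m := mul_nonneg (mul_nonneg ha0 hb0) hm0
      have h4 : 0 ≤ a * b * m * (4 * ρ ^ 2 - 1) :=
        mul_nonneg habm (by linarith)
      have h5 : 0 ≤ (a - b) ^ 2 * Q := mul_nonneg (sq_nonneg _) hQpos.le
      rw [hQeq] at h5 ⊢
      linarith [h4, h5]
    have hT16 : T ^ 2 * (16 * ρ ^ 2) ≤ (a + b) ^ 2 := by
      have h6 : T ^ 2 * (16 * ρ ^ 2) * Q ≤ (a + b) ^ 2 * Q := by
        have h7 := mul_le_mul_of_nonneg_left hT2Q (by positivity : (0:ℝ) ≤ 16 * ρ ^ 2)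
        linarith [h7, hkey]
      exact le_of_mul_le_mul_right h6 hQpos
    have hTsq : T ^ 2 ≤ ((a + b) / (4 * ρ)) ^ 2 := by
      rw [div_pow, le_div_iff₀ (by positivity)]
      have e : (4 * ρ) ^ 2 = 16 * ρ ^ 2 := by ring
      rw [e]
      linarith [hT16]
    have hTle : T ≤ (a + b) / (4 * ρ) :=
      le_of_pow_le_pow_left₀ two_ne_zero (by positivity) hTsq
    calc T ≤ (a + b) / (4 * ρ) := hTle
      _ ≤ u ^ 2 / (4 * ρ) := (div_le_div_iff_of_pos_right (by positivity)).mpr hab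
  -- ### Part 2 : gradient step contraction
  set g : EuclideanSpace ℝ (Fin d) := gradient f β with hgdef
  set w : EuclideanSpace ℝ (Fin d) := β - (1 / μL) • g with hwdef
  have hcμ : (0:ℝ) < 1 / μL := by positivity
  have hwβ : w - β = -((1 / μL) • g) := by rw [hwdef]; abel
  have hgrad : ‖g‖ ^ 2 ≤ 2 * μL * (f β - f βs) := by
    have h2 := (hsc w β).2
    rw [← hgdef] at h2
    have hinn : ⟪g, w - β⟫ = -(1 / μL * ‖g‖ ^ 2) := by
      rw [hwβ, inner_neg_right, real_inner_smul_right, real_inner_self_eq_norm_sq]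
    have hnw : ‖w - β‖ ^ 2 = (1 / μL) ^ 2 * ‖g‖ ^ 2 := by
      rw [hwβ, norm_neg, norm_smul, Real.norm_eq_abs, abs_of_pos hcμ]
      ring
    rw [hinn, hnw] at h2
    have e2 : μL / 2 * ((1 / μL) ^ 2 * ‖g‖ ^ 2) = 1 / (2 * μL) * ‖g‖ ^ 2 := by
      field_simp
    have e3 : 1 / μL * ‖g‖ ^ 2 - 1 / (2 * μL) * ‖g‖ ^ 2 = 1 / (2 * μL) * ‖g‖ ^ 2 := by
      field_simp
      ring
    have h4 : 1 / (2 * μL) * ‖g‖ ^ 2 ≤ f β - f βs := by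
      have h3 := hmin w
      linarith [h2, h3, e2, e3]
    have h5 := mul_le_mul_of_nonneg_left h4 (by positivity : (0:ℝ) ≤ 2 * μL)
    have e5 : 2 * μL * (1 / (2 * μL) * ‖g‖ ^ 2) = ‖g‖ ^ 2 := by field_simp
    linarith [h5, e5]
  have hsc1 : f β - f βs + μα / 2 * r ^ 2 ≤ ⟪g, β - βs⟫ := by
    have hlow := (hsc βs β).1
    rw [← hgdef] at hlow
    have e : ⟪g, βs - β⟫ = -⟪g, β - βs⟫ := by
      rw [← neg_sub β βs, inner_neg_right]
    have en : ‖βs - β‖ = r := by rw [hrdef, norm_sub_rev]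
    rw [e, en] at hlow
    linarith
  have hD : 0 ≤ f β - f βs := by linarith [hmin β]
  have hwexp : ‖w - βs‖ ^ 2
      = r ^ 2 - 2 * (1 / μL * ⟪g, β - βs⟫) + (1 / μL) ^ 2 * ‖g‖ ^ 2 := by
    have hrw : w - βs = (β - βs) - (1 / μL) • g := by rw [hwdef]; abel
    rw [hrw, norm_sub_sq_real, real_inner_smul_right, norm_smul, Real.norm_eq_abs,
      abs_of_pos hcμ, real_inner_comm, ← hrdef]
    ring
  have hwcon : ‖w - βs‖ ^ 2 ≤ (1 - μα * (1 / μL)) * r ^ 2 := by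
    have h8 := mul_le_mul_of_nonneg_left hsc1 hcμ.le
    have h9 : (1 / μL) ^ 2 * ‖g‖ ^ 2 ≤ 2 * (1 / μL) * (f β - f βs) := by
      have h := mul_le_mul_of_nonneg_left hgrad (sq_nonneg (1 / μL))
      have e : (1 / μL) ^ 2 * (2 * μL * (f β - f βs)) = 2 * (1 / μL) * (f β - f βs) := by
        field_simp
      linarith
    linarith [hwexp, h8, h9]
  have hX1 : 1 / ρ ≤ 1 := by rw [div_le_one hρ0]; exact hρ1
  have hX0 : (0:ℝ) < 1 / ρ := by positivity
  have hwle : ‖w - βs‖ ≤ (1 - 1 / (2 * ρ)) * r := by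
    have hhalf : 1 / (2 * ρ) ≤ 1 / 2 :=
      one_div_le_one_div_of_le zero_lt_two (by linarith)
    have hcoef : 0 ≤ 1 - 1 / (2 * ρ) := by linarith
    apply le_of_pow_le_pow_left₀ two_ne_zero (mul_nonneg hcoef hr0)
    have eρ : μα * (1 / μL) = 1 / ρ := by
      rw [hρdef]
      field_simp
    rw [eρ] at hwcon
    have hsq : ((1 - 1 / (2 * ρ)) * r) ^ 2
        = (1 - 1 / ρ) * r ^ 2 + (1 / (2 * ρ)) ^ 2 * r ^ 2 := by ring
    have hpos : 0 ≤ (1 / (2 * ρ)) ^ 2 * r ^ 2 := by positivity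
    linarith [hwcon, hsq, hpos]
  -- ### Part 3 : robust descent condition term
  have hRDCt : ⟪βbar - βs, z - w⟫ ≤ 1 / μL * ((α * r + ψ) * u) := by
    have hzw : z - w = (1 / μL) • (g - Ghat β) := by
      rw [hzdef, hwdef, hgdef]
      module
    rw [hzw, real_inner_smul_right]
    apply mul_le_mul_of_nonneg_left _ hcμ.le
    have h := hRDC β βbar
    rw [← hrdef, ← hudef, ← hgdef] at h
    have e : ⟪βbar - βs, g - Ghat β⟫ = -⟪Ghat β - g, βbar - βs⟫ := by
      rw [real_inner_comm, ← neg_sub (Ghat β) g, inner_neg_left]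
    rw [e]
    linarith [(abs_le.mp h).1]
  -- ### Part 4 : combine
  have hsplit : u ^ 2 = ⟪βs - βbar, z - βbar⟫ + ⟪βbar - βs, w - βs⟫ + ⟪βbar - βs, z - w⟫ := by
    have h1 : ⟪βs - βbar, z - βbar⟫ = ⟪βbar - βs, βbar - z⟫ := by
      rw [← neg_sub βbar βs, ← neg_sub βbar z, inner_neg_neg]
    have h2 : ⟪βbar - βs, βbar - z⟫ + ⟪βbar - βs, w - βs⟫ + ⟪βbar - βs, z - w⟫
        = ⟪βbar - βs, βbar - βs⟫ := by
      rw [← inner_add_right, ← inner_add_right]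
      congr 1
      abel
    rw [hudef, ← real_inner_self_eq_norm_sq]
    linarith [h1, h2]
  have hmid : ⟪βbar - βs, w - βs⟫ ≤ (1 - 1 / (2 * ρ)) * r * u := by
    calc ⟪βbar - βs, w - βs⟫ ≤ ‖βbar - βs‖ * ‖w - βs‖ := real_inner_le_norm _ _
      _ = u * ‖w - βs‖ := by rw [← hudef]
      _ ≤ u * ((1 - 1 / (2 * ρ)) * r) := mul_le_mul_of_nonneg_left hwle hu0
      _ = (1 - 1 / (2 * ρ)) * r * u := by ring
  have hcomb : u ^ 2 ≤ (1 / ρ) * (1 / 4) * u ^ 2 + (1 - (1 / ρ) * (1 / 2)) * (r * u)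
      + α * (1 / μL) * (r * u) + ψ * (1 / μL) * u := by
    have e1 : u ^ 2 / (4 * ρ) = (1 / ρ) * (1 / 4) * u ^ 2 := by ring
    have e2 : (1 - 1 / (2 * ρ)) * r * u = (1 - (1 / ρ) * (1 / 2)) * (r * u) := by ring
    have e3 : 1 / μL * ((α * r + ψ) * u) = α * (1 / μL) * (r * u) + ψ * (1 / μL) * u := by
      ring
    linarith [hsplit, hHT, hmid, hRDCt, e1, e2, e3]
  have hαX : α * (1 / μL) ≤ (1 / ρ) * (1 / 32) := by
    have h1 : α * (1 / μL) ≤ μα / 32 * (1 / μL) :=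
      mul_le_mul_of_nonneg_right hαsmall hcμ.le
    have e : μα / 32 * (1 / μL) = μα / μL * (1 / 32) := by ring
    have eρ : μα / μL = 1 / ρ := by rw [hρdef, one_div_div]
    rw [e, eρ] at h1
    exact h1
  have hprod : α * (1 / μL) * (r * u) ≤ (1 / ρ) * (1 / 32) * (r * u) :=
    mul_le_mul_of_nonneg_right hαX (mul_nonneg hr0 hu0)
  have hsψ : 0 ≤ ψ * (1 / μL) := by positivity
  have hq : u * (1 - (1 / ρ) * (1 / 4)) * u
      ≤ ((1 - (1 / ρ) * (15 / 32)) * r + ψ * (1 / μL)) * u := by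
    nlinarith [hcomb, hprod]
  have hcpos : (0:ℝ) < 1 - (1 / ρ) * (1 / 4) := by linarith
  have hgoal : u ≤ (1 - (1 / ρ) * (1 / 8)) * r + 4 * (ψ * (1 / μL)) := by
    rcases eq_or_lt_of_le hu0 with h0 | hupos
    · have h1 : 0 ≤ (1 - (1 / ρ) * (1 / 8)) * r :=
        mul_nonneg (by linarith) hr0
      linarith
    · have key : (1 - (1 / ρ) * (15 / 32)) * r + ψ * (1 / μL)
          ≤ ((1 - (1 / ρ) * (1 / 8)) * r + 4 * (ψ * (1 / μL))) * (1 - (1 / ρ) * (1 / 4)) := by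
        nlinarith [mul_nonneg hX0.le hr0, mul_nonneg (mul_nonneg hX0.le hX0.le) hr0,
          mul_nonneg (sub_nonneg.mpr hX1) hsψ, hsψ]
      have h5 : u * (1 - (1 / ρ) * (1 / 4))
          ≤ ((1 - (1 / ρ) * (1 / 8)) * r + 4 * (ψ * (1 / μL))) * (1 - (1 / ρ) * (1 / 4)) :=
        le_trans (le_of_mul_le_mul_right hq hupos) key
      exact le_of_mul_le_mul_right h5 hcpos
  have efin : (1 - 1 / (8 * ρ)) * r + 4 * ψ / μL
      = (1 - (1 / ρ) * (1 / 8)) * r + 4 * (ψ * (1 / μL)) := by ring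
  rw [efin]
  exact hgoal
end
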